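/- arXiv:1501.01409 — 7 statements merged into one kernel-verified Lean document; each statement's English description precedes it below -/
import Mathlib

section
/- Let n, m, r be positive integers, let A : ℝ → Mat(n,n) and C : ℝ → Mat(m,n) be continuous matrix-valued functions and W ∈ Mat(m,m) a symmetric positive semidefinite matrix. Suppose L : [0,∞) → Mat(n,r) is differentiable with L'(t) = A(t) L(t), and U : [0,∞) → Mat(r,r) is differentiable with U'(t) = L(t)ᵀ C(t)ᵀ W C(t) L(t), and U(t) is invertible for every t ≥ 0. Then the matrix function P(t) = L(t) U(t)^{-1} L(t)ᵀ is differentiable and satisfies the Riccati equation P'(t) = A(t) P(t) + P(t) A(t)ᵀ − P(t) C(t)ᵀ W C(t) P(t) for all t ≥ 0. -/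
open Matrix

attribute [local instance] Matrix.linftyOpNormedAddCommGroup Matrix.linftyOpNormedSpace
attribute [local instance] Matrix.linftyOpNormedRing Matrix.linftyOpNormedAlgebra

variable {r : ℕ}

lemma hasDerivAt_matrix {f : ℝ → Matrix (Fin r) (Fin r) ℝ} {f' : Matrix (Fin r) (Fin r) ℝ}
    {t : ℝ} : HasDerivAt f f' t ↔ ∀ i j, HasDerivAt (fun s => f s i j) (f' i j) t := by
  constructor
  · intro h i j
    let e : Matrix (Fin r) (Fin r) ℝ →ₗ[ℝ] ℝ :=
      { toFun := fun M => M i j, map_add' := fun _ _ => rfl, map_smul' := fun _ _ => rfl }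
    have := (LinearMap.toContinuousLinearMap e).hasFDerivAt.comp_hasDerivAt t h
    exact this
  · intro h
    have heq : ∀ s, f s = ∑ i, ∑ j, f s i j • Matrix.single i j (1 : ℝ) := by
      intro s
      conv_lhs => rw [matrix_eq_sum_single (f s)]
      simp [smul_single]
    have h2 : HasDerivAt (fun s => ∑ i, ∑ j, f s i j • Matrix.single i j (1 : ℝ))
        (∑ i, ∑ j, f' i j • Matrix.single i j (1 : ℝ)) t :=
      HasDerivAt.fun_sum fun i _ => HasDerivAt.fun_sum fun j _ => (h i j).smul_const _
    have : f = fun s => ∑ i, ∑ j, f s i j • Matrix.single i j (1 : ℝ) := funext heq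
    rw [this]
    convert h2 using 1
    conv_lhs => rw [matrix_eq_sum_single f']
    simp [smul_single]

lemma hasDerivAt_inv_matrix {U : ℝ → Matrix (Fin r) (Fin r) ℝ} {U' : Matrix (Fin r) (Fin r) ℝ}
    {t : ℝ} (hU : HasDerivAt U U' t) (h : IsUnit (U t)) :
    HasDerivAt (fun s => (U s)⁻¹) (-((U t)⁻¹ * U' * (U t)⁻¹)) t := by
  have hfd : HasFDerivAt Ring.inverse
      (-ContinuousLinearMap.mulLeftRight ℝ _ ↑h.unit⁻¹ ↑h.unit⁻¹) (U t) := by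
    have := hasFDerivAt_ringInverse (𝕜 := ℝ) h.unit
    rwa [h.unit_spec] at this
  have := hfd.comp_hasDerivAt t hU
  have heq : (fun s => (U s)⁻¹) = fun s => Ring.inverse (U s) := by
    funext s; exact Matrix.nonsing_inv_eq_ringInverse _
  rw [heq]
  refine HasDerivAt.congr_deriv this ?_
  simp [Matrix.coe_units_inv, h.unit_spec]

lemma entry_mul {p q s : ℕ} {M : ℝ → Matrix (Fin p) (Fin q) ℝ} {N : ℝ → Matrix (Fin q) (Fin s) ℝ}
    {M' : Matrix (Fin p) (Fin q) ℝ} {N' : Matrix (Fin q) (Fin s) ℝ} {t : ℝ}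
    (hM : ∀ i j, HasDerivAt (fun u => M u i j) (M' i j) t)
    (hN : ∀ i j, HasDerivAt (fun u => N u i j) (N' i j) t) :
    ∀ i j, HasDerivAt (fun u => (M u * N u) i j) ((M' * N t + M t * N') i j) t := by
  intro i j
  have h1 : HasDerivAt (fun u => ∑ k, M u i k * N u k j)
      (∑ k, (M' i k * N t k j + M t i k * N' k j)) t :=
    HasDerivAt.fun_sum fun k _ => (hM i k).mul (hN k j)
  have h2 : (fun u => (M u * N u) i j) = fun u => ∑ k, M u i k * N u k j := by
    funext u; exact Matrix.mul_apply
  rw [h2]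
  convert h1 using 1
  simp [Matrix.mul_apply, Matrix.add_apply, Finset.sum_add_distrib]

/-- Reduced-order covariance ansatz of reduced-order Kalman filtering:
if `L' = A L`, `U' = Lᵀ Cᵀ W C L` and `U t` is invertible for `t ≥ 0`, then
`P = L U⁻¹ Lᵀ` is differentiable and satisfies the Riccati equation
`P' = A P + P Aᵀ − P Cᵀ W C P`.  Differentiability of matrix-valued maps is
expressed entrywise via `HasDerivAt`. -/
theorem reduced_factor_satisfies_riccati
    (n m r : ℕ) (hn : 0 < n) (hm : 0 < m) (hr : 0 < r)
    (A : ℝ → Matrix (Fin n) (Fin n) ℝ) (C : ℝ → Matrix (Fin m) (Fin n) ℝ)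
    (hA : ∀ i j, Continuous fun t => A t i j)
    (hC : ∀ i j, Continuous fun t => C t i j)
    (W : Matrix (Fin m) (Fin m) ℝ) (hW : W.PosSemidef)
    (L : ℝ → Matrix (Fin n) (Fin r) ℝ)
    (hL : ∀ t, 0 ≤ t → ∀ i j, HasDerivAt (fun s => L s i j) ((A t * L t) i j) t)
    (U : ℝ → Matrix (Fin r) (Fin r) ℝ)
    (hU : ∀ t, 0 ≤ t → ∀ i j, HasDerivAt (fun s => U s i j)
      (((L t)ᵀ * (C t)ᵀ * W * C t * L t) i j) t)
    (hUinv : ∀ t, 0 ≤ t → IsUnit (U t).det) :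
    ∀ t, 0 ≤ t → ∀ i j, HasDerivAt (fun s => (L s * (U s)⁻¹ * (L s)ᵀ) i j)
      ((A t * (L t * (U t)⁻¹ * (L t)ᵀ) + (L t * (U t)⁻¹ * (L t)ᵀ) * (A t)ᵀ
        - (L t * (U t)⁻¹ * (L t)ᵀ) * (C t)ᵀ * W * (C t) * (L t * (U t)⁻¹ * (L t)ᵀ)) i j) t := by
  intro t ht i j
  have hUmat : HasDerivAt U ((L t)ᵀ * (C t)ᵀ * W * C t * L t) t :=
    hasDerivAt_matrix.mpr (hU t ht)
  have hinv := hasDerivAt_inv_matrix hUmat ((Matrix.isUnit_iff_isUnit_det _).mpr (hUinv t ht))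
  have hinv' := hasDerivAt_matrix.mp hinv
  have hLT : ∀ i j, HasDerivAt (fun s => (L s)ᵀ i j) ((A t * L t)ᵀ i j) t :=
    fun i j => hL t ht j i
  have hK := entry_mul (hL t ht) hinv'
  have hP := entry_mul hK hLT
  have key : ((A t * L t * (U t)⁻¹ +
        L t * -((U t)⁻¹ * ((L t)ᵀ * (C t)ᵀ * W * C t * L t) * (U t)⁻¹)) * (L t)ᵀ
      + L t * (U t)⁻¹ * (A t * L t)ᵀ)
      = (A t * (L t * (U t)⁻¹ * (L t)ᵀ) + (L t * (U t)⁻¹ * (L t)ᵀ) * (A t)ᵀ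
        - (L t * (U t)⁻¹ * (L t)ᵀ) * (C t)ᵀ * W * (C t) * (L t * (U t)⁻¹ * (L t)ᵀ)) := by
    simp only [Matrix.transpose_mul, Matrix.mul_neg, Matrix.neg_mul, Matrix.add_mul,
      Matrix.mul_assoc, sub_eq_add_neg]
    abel
  rw [← key]
  exact hP i j
end

section
/- In the coupled observer error system, the transformed mechanical error δη = x̃^m − L^m δμ is differentiable and satisfies the autonomous (decoupled) dynamics (δη)'(t) = (A^m(t) − K(t) H^m) δη(t) for all t ≥ 0; that is, δη evolves exactly as the error of the Luenberger observer for the mechanical subsystem alone, unaffected by the electrical error or the optimal-filter correction. -/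
open Matrix
private lemma hdMul {n m p : Type*} [Fintype m] {A : ℝ → Matrix n m ℝ} {B : ℝ → Matrix m p ℝ}
    {A' : Matrix n m ℝ} {B' : Matrix m p ℝ} {t : ℝ}
    (hA : ∀ i j, HasDerivAt (fun s => A s i j) (A' i j) t)
    (hB : ∀ i j, HasDerivAt (fun s => B s i j) (B' i j) t) :
    ∀ i j, HasDerivAt (fun s => (A s * B s) i j) ((A' * B t + A t * B') i j) t := by
  intro i j
  simp only [Matrix.mul_apply, Matrix.add_apply, ← Finset.sum_add_distrib]
  exact HasDerivAt.fun_sum fun k _ => (hA i k).mul (hB k j)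

private lemma hdMulVec {n m : Type*} [Fintype m] {A : ℝ → Matrix n m ℝ} {v : ℝ → m → ℝ}
    {A' : Matrix n m ℝ} {v' : m → ℝ} {t : ℝ}
    (hA : ∀ i j, HasDerivAt (fun s => A s i j) (A' i j) t)
    (hv : ∀ j, HasDerivAt (fun s => v s j) (v' j) t) :
    ∀ i, HasDerivAt (fun s => (A s).mulVec (v s) i) ((A'.mulVec (v t) + (A t).mulVec v') i) t := by
  intro i
  simp only [Matrix.mulVec, dotProduct, Pi.add_apply, ← Finset.sum_add_distrib]
  exact HasDerivAt.fun_sum fun k _ => (hA i k).mul (hv k)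

private lemma hdDet {n : Type*} [Fintype n] [DecidableEq n] {A : ℝ → Matrix n n ℝ} {t : ℝ}
    (hA : ∀ i j, DifferentiableAt ℝ (fun s => A s i j) t) :
    DifferentiableAt ℝ (fun s => (A s).det) t := by
  simp only [Matrix.det_apply']
  exact DifferentiableAt.fun_sum fun σ _ =>
    ((DifferentiableAt.fun_finsetProd fun k _ => hA (σ k) k).const_mul _)

private lemma hdInv {n : Type*} [Fintype n] [DecidableEq n] {A : ℝ → Matrix n n ℝ} {t : ℝ}
    (hA : ∀ i j, DifferentiableAt ℝ (fun s => A s i j) t)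
    (hdet : (A t).det ≠ 0) :
    ∀ i j, DifferentiableAt ℝ (fun s => (A s)⁻¹ i j) t := by
  intro i j
  have hadj : DifferentiableAt ℝ (fun s => (A s).adjugate i j) t := by
    simp only [Matrix.adjugate_apply]
    apply hdDet
    intro k l
    rcases eq_or_ne k j with rfl | hk
    · simp only [Matrix.updateRow_self]
      exact differentiableAt_const _
    · simp only [Matrix.updateRow_ne hk]
      exact hA k l
  have hd : DifferentiableAt ℝ (fun s => (A s).det) t := hdDet hA
  have heq : (fun s => (A s)⁻¹ i j) = fun s => ((A s).det)⁻¹ * (A s).adjugate i j := by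
    funext s
    rw [Matrix.inv_def, Ring.inverse_eq_inv, Matrix.smul_apply, smul_eq_mul]
  rw [heq]
  exact (hd.inv hdet).mul hadj

/-- Coupled observer error system: the transformed mechanical error
`δη = x̃ᵐ − Lᵐ δμ` (with `δμ = (Lᵉ)⁻¹ x̃ᵉ`) is differentiable and satisfies the
decoupled Luenberger-error dynamics `(δη)' = (Aᵐ − K Hᵐ) δη` on `[0,∞)`. -/
theorem coupled_observer_mech_error_decoupled
    (ne nm me mm : ℕ) (hne : 0 < ne) (hnm : 0 < nm) (hme : 0 < me) (hmm : 0 < mm)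
    (Ae : ℝ → Matrix (Fin ne) (Fin ne) ℝ)
    (Am : ℝ → Matrix (Fin nm) (Fin nm) ℝ)
    (B : ℝ → Matrix (Fin nm) (Fin ne) ℝ)
    (K : ℝ → Matrix (Fin nm) (Fin mm) ℝ)
    (hAe : ∀ i j, Continuous fun t => Ae t i j)
    (hAm : ∀ i j, Continuous fun t => Am t i j)
    (hB : ∀ i j, Continuous fun t => B t i j)
    (hK : ∀ i j, Continuous fun t => K t i j)
    (He : Matrix (Fin me) (Fin ne) ℝ) (Hm : Matrix (Fin mm) (Fin nm) ℝ)
    (We : Matrix (Fin me) (Fin me) ℝ) (Wm : Matrix (Fin mm) (Fin mm) ℝ)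
    (hWe : We.PosSemidef) (hWm : Wm.PosSemidef)
    (Le : ℝ → Matrix (Fin ne) (Fin ne) ℝ)
    (hLe : ∀ t, 0 ≤ t → ∀ i j, HasDerivAt (fun s => Le s i j) ((Ae t * Le t) i j) t)
    (hLe0 : Le 0 = 1)
    (hLeInv : ∀ t, 0 ≤ t → IsUnit (Le t).det)
    (Lm : ℝ → Matrix (Fin nm) (Fin ne) ℝ)
    (hLm : ∀ t, 0 ≤ t → ∀ i j, HasDerivAt (fun s => Lm s i j)
      (((Am t - K t * Hm) * Lm t + B t * Le t) i j) t)
    (hLm0 : Lm 0 = 0)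
    (U : ℝ → Matrix (Fin ne) (Fin ne) ℝ)
    (hU : ∀ t, 0 ≤ t → ∀ i j, HasDerivAt (fun s => U s i j)
      (((Le t)ᵀ * Heᵀ * We * He * Le t + (Lm t)ᵀ * Hmᵀ * Wm * Hm * Lm t) i j) t)
    (hU0 : (U 0).PosDef)
    (hUpos : ∀ t, 0 ≤ t → (U t).PosDef)
    (xe : ℝ → Fin ne → ℝ) (xm : ℝ → Fin nm → ℝ)
    (hxe : ∀ t, 0 ≤ t → ∀ i, HasDerivAt (fun s => xe s i)
      (((Ae t).mulVec (xe t) - (Le t * (U t)⁻¹).mulVec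
        (((Le t)ᵀ * Heᵀ * We * He).mulVec (xe t)
          + ((Lm t)ᵀ * Hmᵀ * Wm * Hm).mulVec (xm t))) i) t)
    (hxm : ∀ t, 0 ≤ t → ∀ i, HasDerivAt (fun s => xm s i)
      (((Am t - K t * Hm).mulVec (xm t) + (B t).mulVec (xe t)
        - (Lm t * (U t)⁻¹).mulVec
          (((Le t)ᵀ * Heᵀ * We * He).mulVec (xe t)
            + ((Lm t)ᵀ * Hmᵀ * Wm * Hm).mulVec (xm t))) i) t)
    :
    ∀ t, 0 ≤ t → ∀ i, HasDerivAt
      (fun s => (xm s - (Lm s).mulVec ((Le s)⁻¹.mulVec (xe s))) i)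
      (((Am t - K t * Hm).mulVec (xm t - (Lm t).mulVec ((Le t)⁻¹.mulVec (xe t)))) i) t := by
  intro t ht i
  have hdetu := hLeInv t ht
  have hdet0 : (Le t).det ≠ 0 := hdetu.ne_zero
  have hLeD : ∀ i j, DifferentiableAt ℝ (fun s => Le s i j) t :=
    fun i j => (hLe t ht i j).differentiableAt
  have hMd := hdInv hLeD hdet0
  set D : Matrix (Fin ne) (Fin ne) ℝ :=
    Matrix.of (fun i j => deriv (fun s => (Le s)⁻¹ i j) t) with hDdef
  have hM' : ∀ i j, HasDerivAt (fun s => (Le s)⁻¹ i j) (D i j) t :=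
    fun i j => (hMd i j).hasDerivAt
  have hLM : Le t * (Le t)⁻¹ = 1 := Matrix.mul_nonsing_inv _ hdetu
  have hML : (Le t)⁻¹ * Le t = 1 := Matrix.nonsing_inv_mul _ hdetu
  -- derivative of the inverse
  have hdetC : ContinuousAt (fun s => (Le s).det) t := (hdDet hLeD).continuousAt
  have hev : ∀ᶠ s in nhds t, Le s * (Le s)⁻¹ = 1 := by
    filter_upwards [hdetC.eventually_ne hdet0] with s hs
    exact Matrix.mul_nonsing_inv _ (isUnit_iff_ne_zero.mpr hs)
  have hprod := hdMul (hLe t ht) hM'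
  have hzero : Ae t * Le t * (Le t)⁻¹ + Le t * D = 0 := by
    ext a b
    have h1 : (fun _ : ℝ => (1 : Matrix (Fin ne) (Fin ne) ℝ) a b)
        =ᶠ[nhds t] fun s => (Le s * (Le s)⁻¹) a b := by
      filter_upwards [hev] with s hs; rw [hs]
    have h2 : HasDerivAt (fun _ : ℝ => (1 : Matrix (Fin ne) (Fin ne) ℝ) a b)
        ((Ae t * Le t * (Le t)⁻¹ + Le t * D) a b) t :=
      (hprod a b).congr_of_eventuallyEq h1
    simpa using h2.unique (hasDerivAt_const _ _)
  have hD : D = -((Le t)⁻¹ * Ae t) := by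
    have h1 : Le t * D = -(Ae t) := by
      have := eq_neg_of_add_eq_zero_right hzero
      rw [this, mul_assoc, hLM, mul_one]
    calc D = ((Le t)⁻¹ * Le t) * D := by rw [hML, one_mul]
      _ = (Le t)⁻¹ * (Le t * D) := by rw [mul_assoc]
      _ = (Le t)⁻¹ * (-(Ae t)) := by rw [h1]
      _ = -((Le t)⁻¹ * Ae t) := by rw [mul_neg]
  rw [hD] at hM'
  -- derivative of δμ and of δη
  have hμ := hdMulVec hM' (hxe t ht)
  have hfinal := (hxm t ht i).sub (hdMulVec (hLm t ht) hμ i)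
  simp only [Pi.sub_apply]
  refine HasDerivAt.congr_deriv hfinal ?_
  rw [show ((Am t - K t * Hm).mulVec (xm t - (Lm t).mulVec ((Le t)⁻¹.mulVec (xe t)))) i
      = ((Am t - K t * Hm).mulVec (xm t)
        - (Am t - K t * Hm).mulVec ((Lm t).mulVec ((Le t)⁻¹.mulVec (xe t)))) i from by
    rw [Matrix.mulVec_sub]]
  have e1 : ∀ (p : Type) (X : Matrix (Fin ne) p ℝ), Le t * ((Le t)⁻¹ * X) = X :=
    fun p X => by rw [← Matrix.mul_assoc, hLM, Matrix.one_mul]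
  have e2 : ∀ (p : Type) (X : Matrix (Fin ne) p ℝ), (Le t)⁻¹ * (Le t * X) = X :=
    fun p X => by rw [← Matrix.mul_assoc, hML, Matrix.one_mul]
  simp only [Matrix.mulVec_sub, Matrix.mulVec_add, Matrix.sub_mulVec, Matrix.add_mulVec,
    Matrix.neg_mulVec, Matrix.mulVec_neg, Matrix.mulVec_mulVec, Matrix.add_mul, Matrix.sub_mul,
    Matrix.mul_assoc, hLM, hML, Matrix.mul_one, Matrix.one_mul, e1, e2,
    Pi.sub_apply, Pi.add_apply, Pi.neg_apply]
  ring
end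

section
/- In the coupled observer error system, the transformed electrical error δμ = (L^e)^{-1} x̃^e is differentiable and satisfies (δμ)'(t) = − U(t)^{-1} [ U'(t) δμ(t) + L^m(t)ᵀ (H^m)ᵀ W^m H^m δη(t) ] for all t ≥ 0, where δη = x̃^m − L^m δμ; in particular the dynamics of δμ is driven only by the accumulated observability operator U' and by the decoupled mechanical error δη. -/
open Matrix


section aux

variable {n : ℕ}

attribute [local instance] Matrix.linftyOpNormedRing Matrix.linftyOpNormedAlgebra

lemma hasDerivAt_matrix_of_entries {f : ℝ → Matrix (Fin n) (Fin n) ℝ}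
    {f' : Matrix (Fin n) (Fin n) ℝ} {t : ℝ}
    (h : ∀ i j, HasDerivAt (fun s => f s i j) (f' i j) t) :
    HasDerivAt f f' t := by
  have hrepr : ∀ (A : Matrix (Fin n) (Fin n) ℝ),
      A = ∑ p : Fin n × Fin n, (A p.1 p.2) • single p.1 p.2 (1:ℝ) := by
    intro A
    conv_lhs => rw [matrix_eq_sum_single A]
    rw [← Finset.sum_product']
    refine Finset.sum_congr rfl fun p _ => ?_
    rw [smul_single, smul_eq_mul, mul_one]
  have : HasDerivAt (fun s => ∑ p : Fin n × Fin n,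
      (f s p.1 p.2) • single p.1 p.2 (1:ℝ))
      (∑ p : Fin n × Fin n, (f' p.1 p.2) • single p.1 p.2 (1:ℝ)) t := by
    refine HasDerivAt.fun_sum fun p _ => ?_
    exact (h p.1 p.2).smul_const _
  rw [← hrepr f'] at this
  exact this.congr_deriv rfl |>.congr_of_eventuallyEq
    (Filter.Eventually.of_forall fun s => (hrepr (f s)))

lemma hasDerivAt_entry_of_matrix {f : ℝ → Matrix (Fin n) (Fin n) ℝ}
    {f' : Matrix (Fin n) (Fin n) ℝ} {t : ℝ}
    (h : HasDerivAt f f' t) (i j : Fin n) :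
    HasDerivAt (fun s => f s i j) (f' i j) t := by
  let l : Matrix (Fin n) (Fin n) ℝ →ₗ[ℝ] ℝ :=
    { toFun := fun A => A i j
      map_add' := fun A B => rfl
      map_smul' := fun c A => rfl }
  have := (l.toContinuousLinearMap.hasFDerivAt (x := f t)).comp_hasDerivAt t h
  exact this

lemma hasDerivAt_matrix_inv {f : ℝ → Matrix (Fin n) (Fin n) ℝ}
    {f' : Matrix (Fin n) (Fin n) ℝ} {t : ℝ}
    (hf : HasDerivAt f f' t) (hu : IsUnit (f t).det) :
    HasDerivAt (fun s => (f s)⁻¹) (-((f t)⁻¹ * f' * (f t)⁻¹)) t := by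
  letI : CompleteSpace (Matrix (Fin n) (Fin n) ℝ) := FiniteDimensional.complete ℝ _
  obtain ⟨u, hu'⟩ := (Matrix.isUnit_iff_isUnit_det _).mpr hu
  have h1 : HasFDerivAt (Ring.inverse : Matrix (Fin n) (Fin n) ℝ → _)
      (-(ContinuousLinearMap.mulLeftRight ℝ _ ↑u⁻¹ ↑u⁻¹)) (f t) := by
    rw [← hu']; exact hasFDerivAt_ringInverse u
  have h2 := h1.comp_hasDerivAt t hf
  have h3 : (fun s => Ring.inverse (f s)) = fun s => (f s)⁻¹ := by
    funext s; rw [Matrix.nonsing_inv_eq_ringInverse]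
  have hcoe : (↑u⁻¹ : Matrix (Fin n) (Fin n) ℝ) = (f t)⁻¹ := by
    rw [Matrix.coe_units_inv, hu']
  rw [← h3]
  simp [Function.comp, hcoe] at h2
  exact h2

end aux

section algebra

lemma observer_value_eq {n m : ℕ} (P L Uinv A E : Matrix (Fin n) (Fin n) ℝ)
    (F : Matrix (Fin n) (Fin m) ℝ) (M : Matrix (Fin m) (Fin n) ℝ)
    (xe : Fin n → ℝ) (xm : Fin m → ℝ)
    (h1 : L * P = 1) (h2 : P * L = 1) :
    (-(P * A)).mulVec xe
      + P.mulVec (A.mulVec xe - (L * Uinv).mulVec (E.mulVec xe + F.mulVec xm))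
    = -(Uinv.mulVec ((E * L + F * M).mulVec (P.mulVec xe)
        + F.mulVec (xm - M.mulVec (P.mulVec xe)))) := by
  have hinner : (E * L + F * M).mulVec (P.mulVec xe)
      + F.mulVec (xm - M.mulVec (P.mulVec xe)) = E.mulVec xe + F.mulVec xm := by
    rw [Matrix.add_mulVec, Matrix.mulVec_sub,
      Matrix.mulVec_mulVec (P.mulVec xe) F M,
      Matrix.mulVec_mulVec xe (E * L) P, mul_assoc E L P, h1, mul_one]
    abel
  rw [hinner]
  rw [Matrix.neg_mulVec, Matrix.mulVec_sub, Matrix.mulVec_mulVec (xe) P A,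
    Matrix.mulVec_mulVec _ P (L * Uinv), ← mul_assoc P L Uinv, h2, one_mul]
  abel

end algebra

/-- Coupled observer error system: the transformed electrical error
`δμ = (Lᵉ)⁻¹ x̃ᵉ` is differentiable and satisfies
`(δμ)' = − U⁻¹ ( U' δμ + (Lᵐ)ᵀ (Hᵐ)ᵀ Wᵐ Hᵐ δη )`, where
`U' = (Lᵉ)ᵀ(Hᵉ)ᵀ Wᵉ Hᵉ Lᵉ + (Lᵐ)ᵀ(Hᵐ)ᵀ Wᵐ Hᵐ Lᵐ` and `δη = x̃ᵐ − Lᵐ δμ`. -/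
theorem coupled_observer_elec_error_dynamics
    (ne nm me mm : ℕ) (hne : 0 < ne) (hnm : 0 < nm) (hme : 0 < me) (hmm : 0 < mm)
    (Ae : ℝ → Matrix (Fin ne) (Fin ne) ℝ)
    (Am : ℝ → Matrix (Fin nm) (Fin nm) ℝ)
    (B : ℝ → Matrix (Fin nm) (Fin ne) ℝ)
    (K : ℝ → Matrix (Fin nm) (Fin mm) ℝ)
    (hAe : ∀ i j, Continuous fun t => Ae t i j)
    (hAm : ∀ i j, Continuous fun t => Am t i j)
    (hB : ∀ i j, Continuous fun t => B t i j)
    (hK : ∀ i j, Continuous fun t => K t i j)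
    (He : Matrix (Fin me) (Fin ne) ℝ) (Hm : Matrix (Fin mm) (Fin nm) ℝ)
    (We : Matrix (Fin me) (Fin me) ℝ) (Wm : Matrix (Fin mm) (Fin mm) ℝ)
    (hWe : We.PosSemidef) (hWm : Wm.PosSemidef)
    (Le : ℝ → Matrix (Fin ne) (Fin ne) ℝ)
    (hLe : ∀ t, 0 ≤ t → ∀ i j, HasDerivAt (fun s => Le s i j) ((Ae t * Le t) i j) t)
    (hLe0 : Le 0 = 1)
    (hLeInv : ∀ t, 0 ≤ t → IsUnit (Le t).det)
    (Lm : ℝ → Matrix (Fin nm) (Fin ne) ℝ)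
    (hLm : ∀ t, 0 ≤ t → ∀ i j, HasDerivAt (fun s => Lm s i j)
      (((Am t - K t * Hm) * Lm t + B t * Le t) i j) t)
    (hLm0 : Lm 0 = 0)
    (U : ℝ → Matrix (Fin ne) (Fin ne) ℝ)
    (hU : ∀ t, 0 ≤ t → ∀ i j, HasDerivAt (fun s => U s i j)
      (((Le t)ᵀ * Heᵀ * We * He * Le t + (Lm t)ᵀ * Hmᵀ * Wm * Hm * Lm t) i j) t)
    (hU0 : (U 0).PosDef)
    (hUpos : ∀ t, 0 ≤ t → (U t).PosDef)
    (xe : ℝ → Fin ne → ℝ) (xm : ℝ → Fin nm → ℝ)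
    (hxe : ∀ t, 0 ≤ t → ∀ i, HasDerivAt (fun s => xe s i)
      (((Ae t).mulVec (xe t) - (Le t * (U t)⁻¹).mulVec
        (((Le t)ᵀ * Heᵀ * We * He).mulVec (xe t)
          + ((Lm t)ᵀ * Hmᵀ * Wm * Hm).mulVec (xm t))) i) t)
    (hxm : ∀ t, 0 ≤ t → ∀ i, HasDerivAt (fun s => xm s i)
      (((Am t - K t * Hm).mulVec (xm t) + (B t).mulVec (xe t)
        - (Lm t * (U t)⁻¹).mulVec
          (((Le t)ᵀ * Heᵀ * We * He).mulVec (xe t)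
            + ((Lm t)ᵀ * Hmᵀ * Wm * Hm).mulVec (xm t))) i) t)
    :
    ∀ t, 0 ≤ t → ∀ i, HasDerivAt
      (fun s => ((Le s)⁻¹.mulVec (xe s)) i)
      ((-( (U t)⁻¹.mulVec
        (((Le t)ᵀ * Heᵀ * We * He * Le t + (Lm t)ᵀ * Hmᵀ * Wm * Hm * Lm t).mulVec
            ((Le t)⁻¹.mulVec (xe t))
          + ((Lm t)ᵀ * Hmᵀ * Wm * Hm).mulVec
            (xm t - (Lm t).mulVec ((Le t)⁻¹.mulVec (xe t)))))) i) t := by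
  intro t ht i
  letI : NormedRing (Matrix (Fin ne) (Fin ne) ℝ) := Matrix.linftyOpNormedRing
  letI : NormedAlgebra ℝ (Matrix (Fin ne) (Fin ne) ℝ) := Matrix.linftyOpNormedAlgebra
  have hdet := hLeInv t ht
  have hLeM : HasDerivAt Le (Ae t * Le t) t := hasDerivAt_matrix_of_entries (hLe t ht)
  have hmul1 : Le t * (Le t)⁻¹ = 1 := Matrix.mul_nonsing_inv _ hdet
  have hmul2 : (Le t)⁻¹ * Le t = 1 := Matrix.nonsing_inv_mul _ hdet
  have hInv : HasDerivAt (fun s => (Le s)⁻¹) (-((Le t)⁻¹ * Ae t)) t := by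
    have h := hasDerivAt_matrix_inv hLeM hdet
    have hD : -((Le t)⁻¹ * (Ae t * Le t) * (Le t)⁻¹) = -((Le t)⁻¹ * Ae t) := by
      rw [mul_assoc ((Le t)⁻¹) (Ae t * Le t), mul_assoc (Ae t), hmul1, mul_one]
    rwa [hD] at h
  have hInvE : ∀ i j, HasDerivAt (fun s => (Le s)⁻¹ i j) ((-((Le t)⁻¹ * Ae t)) i j) t :=
    fun i j => hasDerivAt_entry_of_matrix hInv i j
  have hxe' := hxe t ht
  have hsum : HasDerivAt (fun s => ∑ j, (Le s)⁻¹ i j * xe s j)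
      (∑ j, ((-((Le t)⁻¹ * Ae t)) i j * xe t j + (Le t)⁻¹ i j *
        (((Ae t).mulVec (xe t) - (Le t * (U t)⁻¹).mulVec
          (((Le t)ᵀ * Heᵀ * We * He).mulVec (xe t)
            + ((Lm t)ᵀ * Hmᵀ * Wm * Hm).mulVec (xm t))) j))) t := by
    refine HasDerivAt.fun_sum fun j _ => ?_
    exact (hInvE i j).mul (hxe' j)
  have hEq1 : (fun s => ((Le s)⁻¹.mulVec (xe s)) i) = fun s => ∑ j, (Le s)⁻¹ i j * xe s j := by
    funext s; rfl
  rw [hEq1]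
  convert hsum using 1
  have hval : ∑ j, ((-((Le t)⁻¹ * Ae t)) i j * xe t j + (Le t)⁻¹ i j *
        (((Ae t).mulVec (xe t) - (Le t * (U t)⁻¹).mulVec
          (((Le t)ᵀ * Heᵀ * We * He).mulVec (xe t)
            + ((Lm t)ᵀ * Hmᵀ * Wm * Hm).mulVec (xm t))) j))
      = ((-((Le t)⁻¹ * Ae t)).mulVec (xe t) + (Le t)⁻¹.mulVec
        (((Ae t).mulVec (xe t) - (Le t * (U t)⁻¹).mulVec
          (((Le t)ᵀ * Heᵀ * We * He).mulVec (xe t)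
            + ((Lm t)ᵀ * Hmᵀ * Wm * Hm).mulVec (xm t))))) i := by
    simp [Matrix.mulVec, dotProduct, Finset.sum_add_distrib]
  rw [hval]
  have := observer_value_eq ((Le t)⁻¹) (Le t) ((U t)⁻¹) (Ae t)
    ((Le t)ᵀ * Heᵀ * We * He) ((Lm t)ᵀ * Hmᵀ * Wm * Hm) (Lm t)
    (xe t) (xm t) hmul1 hmul2
  rw [← this]
end

section
/- In the coupled observer error system, the quantity U(t) δμ(t) admits the integral representation U(t) δμ(t) = U(0) δμ(0) − ∫₀ᵗ L^m(s)ᵀ (H^m)ᵀ W^m H^m δη(s) ds for all t ≥ 0; equivalently, d/dt ( U(t) δμ(t) ) = − L^m(t)ᵀ (H^m)ᵀ W^m H^m δη(t). -/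
open Matrix MeasureTheory

private lemma detDiffAt {n : ℕ} {f : ℝ → Matrix (Fin n) (Fin n) ℝ} {t : ℝ}
    (hf : ∀ i j, DifferentiableAt ℝ (fun s => f s i j) t) :
    DifferentiableAt ℝ (fun s => (f s).det) t := by
  simp only [Matrix.det_apply']
  exact DifferentiableAt.fun_sum fun σ _ =>
    (DifferentiableAt.fun_finsetProd fun i _ => hf (σ i) i).const_mul _

private lemma invEntryDiffAt {n : ℕ} {f : ℝ → Matrix (Fin n) (Fin n) ℝ} {t : ℝ}
    (hf : ∀ i j, DifferentiableAt ℝ (fun s => f s i j) t)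
    (hdet : (f t).det ≠ 0) (i j : Fin n) :
    DifferentiableAt ℝ (fun s => (f s)⁻¹ i j) t := by
  have hadj : DifferentiableAt ℝ (fun s => (f s).adjugate i j) t := by
    simp only [Matrix.adjugate_apply]
    apply detDiffAt
    intro k l
    simp only [Matrix.updateRow_apply]
    split_ifs
    · exact differentiableAt_const _
    · exact hf k l
  have heq : (fun s => (f s)⁻¹ i j) = fun s => ((f s).det)⁻¹ * (f s).adjugate i j := by
    funext s
    rw [Matrix.inv_def, Ring.inverse_eq_inv', Matrix.smul_apply, smul_eq_mul]
  rw [heq]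
  exact ((detDiffAt hf).inv hdet).mul hadj

private lemma invEntryHasDerivAt {n : ℕ} {f : ℝ → Matrix (Fin n) (Fin n) ℝ}
    {f' : Matrix (Fin n) (Fin n) ℝ} {t : ℝ}
    (hf : ∀ i j, HasDerivAt (fun s => f s i j) (f' i j) t)
    (hdet : IsUnit (f t).det) (i j : Fin n) :
    HasDerivAt (fun s => (f s)⁻¹ i j) ((-((f t)⁻¹ * f' * (f t)⁻¹)) i j) t := by
  have hdet' : (f t).det ≠ 0 := by
    simpa [isUnit_iff_ne_zero] using hdet
  have hdiff : ∀ i j, DifferentiableAt ℝ (fun s => (f s)⁻¹ i j) t :=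
    invEntryDiffAt (fun i j => (hf i j).differentiableAt) hdet'
  set N' : Matrix (Fin n) (Fin n) ℝ :=
    Matrix.of fun i j => deriv (fun s => (f s)⁻¹ i j) t with hN'def
  have hN' : ∀ i j, HasDerivAt (fun s => (f s)⁻¹ i j) (N' i j) t := fun i j =>
    (hdiff i j).hasDerivAt
  have hev : ∀ᶠ s in nhds t, (f s).det ≠ 0 := by
    have hc : ContinuousAt (fun s => (f s).det) t :=
      (detDiffAt fun i j => (hf i j).differentiableAt).continuousAt
    exact hc.eventually_ne hdet'
  have key : N' * f t + (f t)⁻¹ * f' = 0 := by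
    ext i j
    have h1 : HasDerivAt (fun s => ∑ k, (f s)⁻¹ i k * f s k j)
        (∑ k, (N' i k * f t k j + (f t)⁻¹ i k * f' k j)) t :=
      HasDerivAt.fun_sum fun k _ => (hN' i k).mul (hf k j)
    have h2 : HasDerivAt (fun s => ∑ k, (f s)⁻¹ i k * f s k j) 0 t := by
      apply (hasDerivAt_const t ((1 : Matrix (Fin n) (Fin n) ℝ) i j)).congr_of_eventuallyEq
      filter_upwards [hev] with s hs
      rw [← Matrix.mul_apply, Matrix.nonsing_inv_mul _ (isUnit_iff_ne_zero.mpr hs)]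
    have h3 := h1.unique h2
    simp only [Matrix.add_apply, Matrix.mul_apply, Matrix.zero_apply]
    rw [Finset.sum_add_distrib] at h3
    exact h3
  have hfin : N' = -((f t)⁻¹ * f' * (f t)⁻¹) := by
    have h1 : N' * f t = -((f t)⁻¹ * f') := eq_neg_of_add_eq_zero_left key
    calc N' = N' * (f t * (f t)⁻¹) := by rw [Matrix.mul_nonsing_inv _ hdet, mul_one]
    _ = (N' * f t) * (f t)⁻¹ := by rw [mul_assoc]
    _ = -((f t)⁻¹ * f' * (f t)⁻¹) := by rw [h1, neg_mul]
  rw [← hfin]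
  exact hN' i j

private lemma mulDiffAt {a b c : ℕ} {P : ℝ → Matrix (Fin a) (Fin b) ℝ}
    {Q : ℝ → Matrix (Fin b) (Fin c) ℝ} {t : ℝ}
    (hP : ∀ i j, DifferentiableAt ℝ (fun s => P s i j) t)
    (hQ : ∀ i j, DifferentiableAt ℝ (fun s => Q s i j) t) :
    ∀ i j, DifferentiableAt ℝ (fun s => (P s * Q s) i j) t := by
  intro i j
  simp only [Matrix.mul_apply]
  exact DifferentiableAt.fun_sum fun k _ => (hP i k).mul (hQ k j)

private lemma mulVecDiffAt {a b : ℕ} {P : ℝ → Matrix (Fin a) (Fin b) ℝ}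
    {v : ℝ → Fin b → ℝ} {t : ℝ}
    (hP : ∀ i j, DifferentiableAt ℝ (fun s => P s i j) t)
    (hv : ∀ j, DifferentiableAt ℝ (fun s => v s j) t) :
    ∀ i, DifferentiableAt ℝ (fun s => (P s).mulVec (v s) i) t := by
  intro i
  simp only [Matrix.mulVec, dotProduct]
  exact DifferentiableAt.fun_sum fun k _ => (hP i k).mul (hv k)

private lemma keyVec2 {ne : ℕ} (Le Ae Ut : Matrix (Fin ne) (Fin ne) ℝ)
    (xe S : Fin ne → ℝ) (hLe : IsUnit Le.det) :
    (-(Le⁻¹ * Ae)).mulVec xe + Le⁻¹.mulVec (Ae.mulVec xe - (Le * Ut⁻¹).mulVec S)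
      = -(Ut⁻¹.mulVec S) := by
  rw [Matrix.mulVec_sub, Matrix.mulVec_mulVec, Matrix.mulVec_mulVec, Matrix.neg_mulVec,
    ← Matrix.mul_assoc, Matrix.nonsing_inv_mul _ hLe, Matrix.one_mul]
  abel

private lemma keyVec1 {ne nm : ℕ} (A1 : Matrix (Fin ne) (Fin ne) ℝ)
    (A2 : Matrix (Fin ne) (Fin nm) ℝ) (Le Ut : Matrix (Fin ne) (Fin ne) ℝ)
    (Lm : Matrix (Fin nm) (Fin ne) ℝ) (xe : Fin ne → ℝ) (xm : Fin nm → ℝ)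
    (hLe : IsUnit Le.det) (hU : IsUnit Ut.det) :
    (A1 * Le + A2 * Lm).mulVec (Le⁻¹.mulVec xe)
      + Ut.mulVec (-(Ut⁻¹.mulVec (A1.mulVec xe + A2.mulVec xm)))
    = -(A2.mulVec (xm - Lm.mulVec (Le⁻¹.mulVec xe))) := by
  have e0 : (A1 * Le).mulVec (Le⁻¹.mulVec xe) = A1.mulVec xe := by
    rw [Matrix.mulVec_mulVec, Matrix.mul_assoc, Matrix.mul_nonsing_inv _ hLe, Matrix.mul_one]
  have e1 : Ut.mulVec (-(Ut⁻¹.mulVec (A1.mulVec xe + A2.mulVec xm)))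
      = -(A1.mulVec xe + A2.mulVec xm) := by
    rw [Matrix.mulVec_neg, Matrix.mulVec_mulVec, Matrix.mul_nonsing_inv _ hU, Matrix.one_mulVec]
  rw [Matrix.add_mulVec, e0, e1, Matrix.mulVec_sub]
  simp only [Matrix.mulVec_mulVec, ← Matrix.mul_assoc]
  abel


/-- Coupled observer error system: integral representation
`U(t) δμ(t) = U(0) δμ(0) − ∫₀ᵗ (Lᵐ)ᵀ (Hᵐ)ᵀ Wᵐ Hᵐ δη ds`, equivalently
`d/dt (U δμ) = − (Lᵐ)ᵀ (Hᵐ)ᵀ Wᵐ Hᵐ δη`, where `δμ = (Lᵉ)⁻¹ x̃ᵉ` and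
`δη = x̃ᵐ − Lᵐ δμ`. -/
theorem coupled_observer_integral_representation
    (ne nm me mm : ℕ) (hne : 0 < ne) (hnm : 0 < nm) (hme : 0 < me) (hmm : 0 < mm)
    (Ae : ℝ → Matrix (Fin ne) (Fin ne) ℝ)
    (Am : ℝ → Matrix (Fin nm) (Fin nm) ℝ)
    (B : ℝ → Matrix (Fin nm) (Fin ne) ℝ)
    (K : ℝ → Matrix (Fin nm) (Fin mm) ℝ)
    (hAe : ∀ i j, Continuous fun t => Ae t i j)
    (hAm : ∀ i j, Continuous fun t => Am t i j)
    (hB : ∀ i j, Continuous fun t => B t i j)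
    (hK : ∀ i j, Continuous fun t => K t i j)
    (He : Matrix (Fin me) (Fin ne) ℝ) (Hm : Matrix (Fin mm) (Fin nm) ℝ)
    (We : Matrix (Fin me) (Fin me) ℝ) (Wm : Matrix (Fin mm) (Fin mm) ℝ)
    (hWe : We.PosSemidef) (hWm : Wm.PosSemidef)
    (Le : ℝ → Matrix (Fin ne) (Fin ne) ℝ)
    (hLe : ∀ t, 0 ≤ t → ∀ i j, HasDerivAt (fun s => Le s i j) ((Ae t * Le t) i j) t)
    (hLe0 : Le 0 = 1)
    (hLeInv : ∀ t, 0 ≤ t → IsUnit (Le t).det)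
    (Lm : ℝ → Matrix (Fin nm) (Fin ne) ℝ)
    (hLm : ∀ t, 0 ≤ t → ∀ i j, HasDerivAt (fun s => Lm s i j)
      (((Am t - K t * Hm) * Lm t + B t * Le t) i j) t)
    (hLm0 : Lm 0 = 0)
    (U : ℝ → Matrix (Fin ne) (Fin ne) ℝ)
    (hU : ∀ t, 0 ≤ t → ∀ i j, HasDerivAt (fun s => U s i j)
      (((Le t)ᵀ * Heᵀ * We * He * Le t + (Lm t)ᵀ * Hmᵀ * Wm * Hm * Lm t) i j) t)
    (hU0 : (U 0).PosDef)
    (hUpos : ∀ t, 0 ≤ t → (U t).PosDef)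
    (xe : ℝ → Fin ne → ℝ) (xm : ℝ → Fin nm → ℝ)
    (hxe : ∀ t, 0 ≤ t → ∀ i, HasDerivAt (fun s => xe s i)
      (((Ae t).mulVec (xe t) - (Le t * (U t)⁻¹).mulVec
        (((Le t)ᵀ * Heᵀ * We * He).mulVec (xe t)
          + ((Lm t)ᵀ * Hmᵀ * Wm * Hm).mulVec (xm t))) i) t)
    (hxm : ∀ t, 0 ≤ t → ∀ i, HasDerivAt (fun s => xm s i)
      (((Am t - K t * Hm).mulVec (xm t) + (B t).mulVec (xe t)
        - (Lm t * (U t)⁻¹).mulVec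
          (((Le t)ᵀ * Heᵀ * We * He).mulVec (xe t)
            + ((Lm t)ᵀ * Hmᵀ * Wm * Hm).mulVec (xm t))) i) t)
    :
    (∀ t, 0 ≤ t →
      (U t).mulVec ((Le t)⁻¹.mulVec (xe t))
        = (U 0).mulVec ((Le 0)⁻¹.mulVec (xe 0))
          - ∫ s in (0:ℝ)..t, ((Lm s)ᵀ * Hmᵀ * Wm * Hm).mulVec
              (xm s - (Lm s).mulVec ((Le s)⁻¹.mulVec (xe s))))
    ∧ (∀ t, 0 ≤ t → ∀ i, HasDerivAt
        (fun s => ((U s).mulVec ((Le s)⁻¹.mulVec (xe s))) i)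
        ((-(((Lm t)ᵀ * Hmᵀ * Wm * Hm).mulVec
            (xm t - (Lm t).mulVec ((Le t)⁻¹.mulVec (xe t))))) i) t) := by

  -- derivative of the entries of (Le s)⁻¹
  have hNe : ∀ t, 0 ≤ t → ∀ i j, HasDerivAt (fun s => (Le s)⁻¹ i j)
      ((-((Le t)⁻¹ * Ae t)) i j) t := by
    intro t ht i j
    have h := invEntryHasDerivAt (hLe t ht) (hLeInv t ht) i j
    have heq : -((Le t)⁻¹ * (Ae t * Le t) * (Le t)⁻¹) = -((Le t)⁻¹ * Ae t) := by
      rw [Matrix.mul_assoc, Matrix.mul_assoc, Matrix.mul_nonsing_inv _ (hLeInv t ht),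
        Matrix.mul_one]
    rw [heq] at h
    exact h
  -- derivative of the components of δμ = (Le)⁻¹ x̃ᵉ
  have hmu : ∀ t, 0 ≤ t → ∀ j, HasDerivAt (fun s => ((Le s)⁻¹.mulVec (xe s)) j)
      ((-((U t)⁻¹.mulVec (((Le t)ᵀ * Heᵀ * We * He).mulVec (xe t)
        + ((Lm t)ᵀ * Hmᵀ * Wm * Hm).mulVec (xm t)))) j) t := by
    intro t ht j
    have h2 : HasDerivAt (fun s => ((Le s)⁻¹.mulVec (xe s)) j)
        (((-((Le t)⁻¹ * Ae t)).mulVec (xe t) + (Le t)⁻¹.mulVec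
          ((Ae t).mulVec (xe t) - (Le t * (U t)⁻¹).mulVec
            (((Le t)ᵀ * Heᵀ * We * He).mulVec (xe t)
              + ((Lm t)ᵀ * Hmᵀ * Wm * Hm).mulVec (xm t)))) j) t := by
      have h' : HasDerivAt (fun s => ∑ k, (Le s)⁻¹ j k * xe s k)
          (∑ k, ((-((Le t)⁻¹ * Ae t)) j k * xe t k + (Le t)⁻¹ j k *
            (((Ae t).mulVec (xe t) - (Le t * (U t)⁻¹).mulVec
              (((Le t)ᵀ * Heᵀ * We * He).mulVec (xe t)
                + ((Lm t)ᵀ * Hmᵀ * Wm * Hm).mulVec (xm t))) k))) t :=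
        HasDerivAt.fun_sum fun k _ => (hNe t ht j k).mul (hxe t ht k)
      simpa [Matrix.mulVec, dotProduct, Finset.sum_add_distrib] using h'
    rw [keyVec2 (Le t) (Ae t) (U t) (xe t) _ (hLeInv t ht)] at h2
    exact h2
  -- derivative of the components of U δμ
  have hderiv : ∀ t, 0 ≤ t → ∀ i, HasDerivAt
      (fun s => ((U s).mulVec ((Le s)⁻¹.mulVec (xe s))) i)
      ((-(((Lm t)ᵀ * Hmᵀ * Wm * Hm).mulVec
          (xm t - (Lm t).mulVec ((Le t)⁻¹.mulVec (xe t))))) i) t := by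
    intro t ht i
    have hUdet : IsUnit (U t).det := isUnit_iff_ne_zero.mpr (ne_of_gt (hUpos t ht).det_pos)
    have h2 : HasDerivAt (fun s => ((U s).mulVec ((Le s)⁻¹.mulVec (xe s))) i)
        ((((Le t)ᵀ * Heᵀ * We * He * Le t + (Lm t)ᵀ * Hmᵀ * Wm * Hm * Lm t).mulVec
            ((Le t)⁻¹.mulVec (xe t))
          + (U t).mulVec (-((U t)⁻¹.mulVec (((Le t)ᵀ * Heᵀ * We * He).mulVec (xe t)
              + ((Lm t)ᵀ * Hmᵀ * Wm * Hm).mulVec (xm t))))) i) t := by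
      have h' : HasDerivAt (fun s => ∑ k, U s i k * ((Le s)⁻¹.mulVec (xe s)) k)
          (∑ k, (((Le t)ᵀ * Heᵀ * We * He * Le t + (Lm t)ᵀ * Hmᵀ * Wm * Hm * Lm t) i k *
              ((Le t)⁻¹.mulVec (xe t)) k
            + U t i k * ((-((U t)⁻¹.mulVec (((Le t)ᵀ * Heᵀ * We * He).mulVec (xe t)
                + ((Lm t)ᵀ * Hmᵀ * Wm * Hm).mulVec (xm t)))) k))) t :=
        HasDerivAt.fun_sum fun k _ => (hU t ht i k).mul (hmu t ht k)
      simpa only [Matrix.mulVec, dotProduct, Pi.add_apply, Pi.sub_apply,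
        Pi.neg_apply, Matrix.neg_apply, Finset.sum_add_distrib] using h'
    rw [keyVec1 ((Le t)ᵀ * Heᵀ * We * He) ((Lm t)ᵀ * Hmᵀ * Wm * Hm) (Le t) (U t) (Lm t)
      (xe t) (xm t) (hLeInv t ht) hUdet] at h2
    exact h2
  refine ⟨?_, hderiv⟩
  intro t ht
  -- continuity/differentiability of the integrand components
  have hGdiff : ∀ s, 0 ≤ s → ∀ i, DifferentiableAt ℝ
      (fun s' => (((Lm s')ᵀ * Hmᵀ * Wm * Hm).mulVec
        (xm s' - (Lm s').mulVec ((Le s')⁻¹.mulVec (xe s')))) i) s := by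
    intro s hs i
    have hLmT : ∀ i j, DifferentiableAt ℝ (fun s' => (Lm s')ᵀ i j) s := by
      intro i j
      simpa [Matrix.transpose_apply] using (hLm s hs j i).differentiableAt
    have hLmd : ∀ i j, DifferentiableAt ℝ (fun s' => Lm s' i j) s := fun i j =>
      (hLm s hs i j).differentiableAt
    have hxed : ∀ k, DifferentiableAt ℝ (fun s' => xe s' k) s := fun k =>
      (hxe s hs k).differentiableAt
    have hxmd : ∀ k, DifferentiableAt ℝ (fun s' => xm s' k) s := fun k =>
      (hxm s hs k).differentiableAt
    have hLeInvd : ∀ i j, DifferentiableAt ℝ (fun s' => (Le s')⁻¹ i j) s :=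
      invEntryDiffAt (fun i j => (hLe s hs i j).differentiableAt)
        (by simpa [isUnit_iff_ne_zero] using hLeInv s hs)
    have hA2 : ∀ i j, DifferentiableAt ℝ (fun s' => ((Lm s')ᵀ * Hmᵀ * Wm * Hm) i j) s := by
      apply mulDiffAt (Q := fun _ => Hm) ?_ (fun i j => differentiableAt_const _)
      apply mulDiffAt (Q := fun _ => Wm) ?_ (fun i j => differentiableAt_const _)
      exact mulDiffAt (Q := fun _ => Hmᵀ) hLmT (fun i j => differentiableAt_const _)
    have hw : ∀ k, DifferentiableAt ℝ
        (fun s' => (xm s' - (Lm s').mulVec ((Le s')⁻¹.mulVec (xe s'))) k) s := by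
      intro k
      have := (hxmd k).fun_sub (mulVecDiffAt hLmd (mulVecDiffAt hLeInvd hxed) k)
      simpa using this
    exact mulVecDiffAt hA2 hw i
  have hmem : ∀ s ∈ Set.uIcc (0:ℝ) t, (0:ℝ) ≤ s := by
    intro s hs
    rw [Set.uIcc_of_le ht] at hs
    exact hs.1
  have hIntc : ∀ i, IntervalIntegrable (fun s => (((Lm s)ᵀ * Hmᵀ * Wm * Hm).mulVec
      (xm s - (Lm s).mulVec ((Le s)⁻¹.mulVec (xe s)))) i) volume 0 t := by
    intro i
    apply ContinuousOn.intervalIntegrable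
    intro s hs
    exact ((hGdiff s (hmem s hs) i).continuousAt).continuousWithinAt
  have hInt : IntervalIntegrable (fun s => ((Lm s)ᵀ * Hmᵀ * Wm * Hm).mulVec
      (xm s - (Lm s).mulVec ((Le s)⁻¹.mulVec (xe s)))) volume 0 t := by
    apply ContinuousOn.intervalIntegrable
    apply continuousOn_pi.mpr
    intro i s hs
    exact ((hGdiff s (hmem s hs) i).continuousAt).continuousWithinAt
  funext i
  have happ : (∫ s in (0:ℝ)..t, ((Lm s)ᵀ * Hmᵀ * Wm * Hm).mulVec
      (xm s - (Lm s).mulVec ((Le s)⁻¹.mulVec (xe s)))) i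
      = ∫ s in (0:ℝ)..t, (((Lm s)ᵀ * Hmᵀ * Wm * Hm).mulVec
        (xm s - (Lm s).mulVec ((Le s)⁻¹.mulVec (xe s)))) i := by
    have := (ContinuousLinearMap.proj (R := ℝ) (φ := fun _ : Fin ne => ℝ) i
      ).intervalIntegral_comp_comm hInt
    simpa [ContinuousLinearMap.proj_apply] using this.symm
  have hFTC : ∫ s in (0:ℝ)..t, (-((((Lm s)ᵀ * Hmᵀ * Wm * Hm).mulVec
      (xm s - (Lm s).mulVec ((Le s)⁻¹.mulVec (xe s)))) i))
      = ((U t).mulVec ((Le t)⁻¹.mulVec (xe t))) i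
        - ((U 0).mulVec ((Le 0)⁻¹.mulVec (xe 0))) i := by
    apply intervalIntegral.integral_eq_sub_of_hasDerivAt
    · intro s hs
      have h := hderiv s (hmem s hs) i
      simpa [Pi.neg_apply] using h
    · exact (hIntc i).neg
  rw [intervalIntegral.integral_neg] at hFTC
  have := hFTC
  simp only [Pi.sub_apply]
  rw [happ]
  linarith
end

section
/- In the coupled observer error system, if the initial mechanical error vanishes, x̃^m(0) = 0 (so that δη(0) = 0, since L^m(0) = 0), then δη(t) = 0 for all t ≥ 0 and the transformed electrical error is given explicitly by δμ(t) = U(t)^{-1} U(0) δμ(0) for all t ≥ 0. -/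
open Matrix
open Set

/-- det of a matrix with differentiable entries is differentiable. -/
lemma det_diffAt {n : ℕ} {M : ℝ → Matrix (Fin n) (Fin n) ℝ} {t : ℝ}
    (h : ∀ i j, DifferentiableAt ℝ (fun s => M s i j) t) :
    DifferentiableAt ℝ (fun s => (M s).det) t := by
  simp only [Matrix.det_apply']
  exact DifferentiableAt.fun_sum fun σ _ =>
    ((DifferentiableAt.fun_finsetProd (fun i _ => h (σ i) i))).const_mul _

lemma inv_entry_diffAt {n : ℕ} {M : ℝ → Matrix (Fin n) (Fin n) ℝ} {t : ℝ}
    (h : ∀ i j, DifferentiableAt ℝ (fun s => M s i j) t)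
    (hdet : IsUnit (M t).det) (i j : Fin n) :
    DifferentiableAt ℝ (fun s => (M s)⁻¹ i j) t := by
  have hinv : ∀ s, (M s)⁻¹ i j = ((M s).det)⁻¹ * (M s).adjugate i j := by
    intro s
    rw [Matrix.inv_def, Matrix.smul_apply, Ring.inverse_eq_inv', smul_eq_mul]
  simp only [hinv]
  have hadj : DifferentiableAt ℝ (fun s => (M s).adjugate i j) t := by
    simp only [Matrix.adjugate_apply]
    apply det_diffAt
    intro a b
    rcases eq_or_ne a j with rfl | hne
    · simp [Matrix.updateRow_apply]
    · simpa [Matrix.updateRow_apply, hne] using h a b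
  exact ((det_diffAt h).inv (hdet.ne_zero)).mul hadj

/-- product rule for mulVec, componentwise. -/
lemma mulVec_hasDerivAt {n m : ℕ} {M : ℝ → Matrix (Fin n) (Fin m) ℝ}
    {M' : Matrix (Fin n) (Fin m) ℝ} {w : ℝ → Fin m → ℝ} {w' : Fin m → ℝ} {t : ℝ}
    (hM : ∀ i j, HasDerivAt (fun s => M s i j) (M' i j) t)
    (hw : ∀ i, HasDerivAt (fun s => w s i) (w' i) t) (i : Fin n) :
    HasDerivAt (fun s => (M s *ᵥ w s) i) ((M' *ᵥ w t + M t *ᵥ w') i) t := by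
  simp only [Matrix.mulVec, dotProduct, Pi.add_apply]
  rw [← Finset.sum_add_distrib]
  exact HasDerivAt.fun_sum fun j _ => by
    simpa [mul_comm] using (hM i j).fun_mul (hw j)

/-- mulVec is Lipschitz with constant the sum of absolute values of entries. -/
lemma mulVec_lipschitz {n m : ℕ} (A : Matrix (Fin n) (Fin m) ℝ) {C : NNReal}
    (h : (∑ i, ∑ j, |A i j|) ≤ C) : LipschitzWith C (fun y => A *ᵥ y) := by
  apply LipschitzWith.of_dist_le_mul
  intro y z
  rw [dist_eq_norm, dist_eq_norm, ← Matrix.mulVec_sub]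
  set w := y - z with hw
  apply (pi_norm_le_iff_of_nonneg (mul_nonneg C.coe_nonneg (norm_nonneg w))).mpr
  intro i
  have : (A *ᵥ w) i = ∑ j, A i j * w j := rfl
  rw [Real.norm_eq_abs, this]
  calc |∑ j, A i j * w j| ≤ ∑ j, |A i j * w j| := Finset.abs_sum_le_sum_abs _ _
    _ = ∑ j, |A i j| * |w j| := by simp [abs_mul]
    _ ≤ ∑ j, |A i j| * ‖w‖ := Finset.sum_le_sum fun j _ =>
        mul_le_mul_of_nonneg_left (by simpa [Real.norm_eq_abs] using norm_le_pi_norm w j)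
          (abs_nonneg _)
    _ = (∑ j, |A i j|) * ‖w‖ := (Finset.sum_mul _ _ _).symm
    _ ≤ (∑ i', ∑ j, |A i' j|) * ‖w‖ := mul_le_mul_of_nonneg_right
        (Finset.single_le_sum (f := fun i' => ∑ j, |A i' j|)
          (fun i' _ => Finset.sum_nonneg fun j _ => abs_nonneg _)
          (Finset.mem_univ i)) (norm_nonneg _)
    _ ≤ C * ‖w‖ := mul_le_mul_of_nonneg_right h (norm_nonneg _)

/-- Coupled observer error system: if the initial mechanical error vanishes,
`x̃ᵐ(0) = 0` (so `δη(0) = 0` since `Lᵐ(0) = 0`), then `δη ≡ 0` on `[0,∞)` and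
`δμ(t) = U(t)⁻¹ U(0) δμ(0)`, where `δμ = (Lᵉ)⁻¹ x̃ᵉ` and `δη = x̃ᵐ − Lᵐ δμ`. -/
theorem coupled_observer_zero_mech_error
    (ne nm me mm : ℕ) (hne : 0 < ne) (hnm : 0 < nm) (hme : 0 < me) (hmm : 0 < mm)
    (Ae : ℝ → Matrix (Fin ne) (Fin ne) ℝ)
    (Am : ℝ → Matrix (Fin nm) (Fin nm) ℝ)
    (B : ℝ → Matrix (Fin nm) (Fin ne) ℝ)
    (K : ℝ → Matrix (Fin nm) (Fin mm) ℝ)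
    (hAe : ∀ i j, Continuous fun t => Ae t i j)
    (hAm : ∀ i j, Continuous fun t => Am t i j)
    (hB : ∀ i j, Continuous fun t => B t i j)
    (hK : ∀ i j, Continuous fun t => K t i j)
    (He : Matrix (Fin me) (Fin ne) ℝ) (Hm : Matrix (Fin mm) (Fin nm) ℝ)
    (We : Matrix (Fin me) (Fin me) ℝ) (Wm : Matrix (Fin mm) (Fin mm) ℝ)
    (hWe : We.PosSemidef) (hWm : Wm.PosSemidef)
    (Le : ℝ → Matrix (Fin ne) (Fin ne) ℝ)
    (hLe : ∀ t, 0 ≤ t → ∀ i j, HasDerivAt (fun s => Le s i j) ((Ae t * Le t) i j) t)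
    (hLe0 : Le 0 = 1)
    (hLeInv : ∀ t, 0 ≤ t → IsUnit (Le t).det)
    (Lm : ℝ → Matrix (Fin nm) (Fin ne) ℝ)
    (hLm : ∀ t, 0 ≤ t → ∀ i j, HasDerivAt (fun s => Lm s i j)
      (((Am t - K t * Hm) * Lm t + B t * Le t) i j) t)
    (hLm0 : Lm 0 = 0)
    (U : ℝ → Matrix (Fin ne) (Fin ne) ℝ)
    (hU : ∀ t, 0 ≤ t → ∀ i j, HasDerivAt (fun s => U s i j)
      (((Le t)ᵀ * Heᵀ * We * He * Le t + (Lm t)ᵀ * Hmᵀ * Wm * Hm * Lm t) i j) t)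
    (hU0 : (U 0).PosDef)
    (hUpos : ∀ t, 0 ≤ t → (U t).PosDef)
    (xe : ℝ → Fin ne → ℝ) (xm : ℝ → Fin nm → ℝ)
    (hxe : ∀ t, 0 ≤ t → ∀ i, HasDerivAt (fun s => xe s i)
      (((Ae t).mulVec (xe t) - (Le t * (U t)⁻¹).mulVec
        (((Le t)ᵀ * Heᵀ * We * He).mulVec (xe t)
          + ((Lm t)ᵀ * Hmᵀ * Wm * Hm).mulVec (xm t))) i) t)
    (hxm : ∀ t, 0 ≤ t → ∀ i, HasDerivAt (fun s => xm s i)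
      (((Am t - K t * Hm).mulVec (xm t) + (B t).mulVec (xe t)
        - (Lm t * (U t)⁻¹).mulVec
          (((Le t)ᵀ * Heᵀ * We * He).mulVec (xe t)
            + ((Lm t)ᵀ * Hmᵀ * Wm * Hm).mulVec (xm t))) i) t)
    (hxm0 : xm 0 = 0) :
    ∀ t, 0 ≤ t →
      (xm t - (Lm t).mulVec ((Le t)⁻¹.mulVec (xe t)) = 0)
      ∧ ((Le t)⁻¹.mulVec (xe t)
          = ((U t)⁻¹ * U 0).mulVec ((Le 0)⁻¹.mulVec (xe 0))) := by
  classical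
  have hLeD : ∀ t, 0 ≤ t → ∀ i j, DifferentiableAt ℝ (fun s => Le s i j) t :=
    fun t ht i j => (hLe t ht i j).differentiableAt
  set q : ℝ → Fin ne → ℝ := fun s => (Le s)⁻¹ *ᵥ xe s with hqdef
  set S : ℝ → Fin ne → ℝ := fun s =>
    ((Le s)ᵀ * Heᵀ * We * He) *ᵥ xe s + ((Lm s)ᵀ * Hmᵀ * Wm * Hm) *ᵥ xm s with hSdef
  have hLeq : ∀ s, 0 ≤ s → Le s *ᵥ q s = xe s := by
    intro s hs
    show Le s *ᵥ ((Le s)⁻¹ *ᵥ xe s) = xe s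
    rw [Matrix.mulVec_mulVec, Matrix.mul_nonsing_inv _ (hLeInv s hs), Matrix.one_mulVec]
  have hqD : ∀ t, 0 ≤ t → ∀ i, DifferentiableAt ℝ (fun s => q s i) t := by
    intro t ht i
    show DifferentiableAt ℝ (fun s => ((Le s)⁻¹ *ᵥ xe s) i) t
    simp only [Matrix.mulVec, dotProduct]
    exact DifferentiableAt.fun_sum fun j _ =>
      (inv_entry_diffAt (hLeD t ht) (hLeInv t ht) i j).mul (hxe t ht j).differentiableAt
  set q' : ℝ → Fin ne → ℝ := fun t i => deriv (fun s => q s i) t with hq'def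
  have hq'0 : ∀ t, 0 ≤ t → ∀ i, HasDerivAt (fun s => q s i) (q' t i) t :=
    fun t ht i => (hqD t ht i).hasDerivAt
  -- key derivative formula for q
  have hq' : ∀ t, 0 ≤ t → ∀ i, HasDerivAt (fun s => q s i) ((-((U t)⁻¹ *ᵥ S t)) i) t := by
    intro t ht
    have hUd : UniqueDiffWithinAt ℝ (Ici t) t := uniqueDiffOn_Ici t t self_mem_Ici
    have hEq : ∀ i, ((Ae t * Le t) *ᵥ q t + Le t *ᵥ q' t) i
        = (Ae t *ᵥ xe t - (Le t * (U t)⁻¹) *ᵥ S t) i := by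
      intro i
      have h1 : HasDerivWithinAt (fun s => xe s i)
          (((Ae t * Le t) *ᵥ q t + Le t *ᵥ q' t) i) (Ici t) t :=
        ((mulVec_hasDerivAt (hLe t ht) (hq'0 t ht) i).hasDerivWithinAt).congr
          (fun y hy => (congrFun (hLeq y (ht.trans hy)) i).symm)
          ((congrFun (hLeq t ht) i).symm)
      have h2 : HasDerivWithinAt (fun s => xe s i)
          ((Ae t *ᵥ xe t - (Le t * (U t)⁻¹) *ᵥ S t) i) (Ici t) t :=
        (hxe t ht i).hasDerivWithinAt
      exact (h1.derivWithin hUd).symm.trans (h2.derivWithin hUd)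
    have h3 : (Ae t * Le t) *ᵥ q t + Le t *ᵥ q' t
        = Ae t *ᵥ xe t - (Le t * (U t)⁻¹) *ᵥ S t := funext hEq
    rw [← Matrix.mulVec_mulVec, hLeq t ht, sub_eq_add_neg, add_right_inj] at h3
    have h6 : q' t = -((U t)⁻¹ *ᵥ S t) := by
      have h7 := congrArg (fun v => (Le t)⁻¹ *ᵥ v) h3
      simpa [Matrix.mulVec_mulVec, Matrix.mulVec_neg, ← Matrix.mul_assoc,
        Matrix.nonsing_inv_mul _ (hLeInv t ht), Matrix.one_mulVec, Matrix.one_mul] using h7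
    intro i
    exact h6 ▸ hq'0 t ht i
  -- eta and its ODE
  set η : ℝ → Fin nm → ℝ := fun s => xm s - Lm s *ᵥ q s with hηdef
  have hη' : ∀ t, 0 ≤ t → ∀ i,
      HasDerivAt (fun s => η s i) (((Am t - K t * Hm) *ᵥ η t) i) t := by
    intro t ht i
    have h1 := (hxm t ht i).sub (mulVec_hasDerivAt (hLm t ht) (hq' t ht) i)
    have hveq : ((Am t - K t * Hm) *ᵥ η t)
        = ((Am t - K t * Hm) *ᵥ xm t + B t *ᵥ xe t - (Lm t * (U t)⁻¹) *ᵥ S t)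
          - (((Am t - K t * Hm) * Lm t + B t * Le t) *ᵥ q t
            + Lm t *ᵥ (-((U t)⁻¹ *ᵥ S t))) := by
      show (Am t - K t * Hm) *ᵥ (xm t - Lm t *ᵥ q t) = _
      rw [← hLeq t ht]
      simp only [Matrix.mulVec_sub, Matrix.add_mulVec, Matrix.mulVec_neg,
        Matrix.mulVec_mulVec]
      abel
    rw [show (((Am t - K t * Hm) *ᵥ η t) i) = _ from congrFun hveq i]
    exact h1
  -- uniqueness: eta vanishes
  have hη0 : ∀ T, 0 ≤ T → η T = 0 := by
    intro T hT
    have hAc : ∀ i j, Continuous fun s => (Am s - K s * Hm) i j := by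
      intro i j
      simp only [Matrix.sub_apply, Matrix.mul_apply]
      exact (hAm i j).sub (continuous_finset_sum _ fun k _ => (hK i k).mul continuous_const)
    have hc : Continuous fun s => ∑ i, ∑ j, |(Am s - K s * Hm) i j| :=
      continuous_finset_sum _ fun i _ => continuous_finset_sum _ fun j _ => (hAc i j).abs
    obtain ⟨C, hC⟩ := (isCompact_Icc (a := (0:ℝ)) (b := T)).exists_bound_of_continuousOn
      hc.continuousOn
    set clamp : ℝ → ℝ := fun s => max 0 (min s T) with hclampdef
    have hclampmem : ∀ s, clamp s ∈ Icc (0:ℝ) T := fun s =>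
      ⟨le_max_left _ _, max_le hT (min_le_right _ _)⟩
    set v : ℝ → (Fin nm → ℝ) → (Fin nm → ℝ) :=
      fun s y => (Am (clamp s) - K (clamp s) * Hm) *ᵥ y with hvdef
    have hlip : ∀ s, LipschitzOnWith C.toNNReal (v s) (univ) := by
      intro s
      apply LipschitzWith.lipschitzOnWith
      apply mulVec_lipschitz
      have hb := hC _ (hclampmem s)
      rw [Real.norm_eq_abs] at hb
      exact ((le_abs_self _).trans hb).trans (Real.le_coe_toNNReal C)
    have hcont : ContinuousOn η (Icc 0 T) := by
      apply continuousOn_pi.mpr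
      intro i s hs
      exact ((hη' s hs.1 i).continuousAt.continuousWithinAt)
    have huniq := ODE_solution_unique_of_mem_Icc_right (v := v) (s := fun _ => univ)
      (fun s _ => hlip s) hcont
      (fun s hs => by
        have hcl : clamp s = s := by
          rw [hclampdef]
          simp [min_eq_left hs.2.le, max_eq_right hs.1]
        have hd : HasDerivAt η (v s (η s)) s := by
          rw [hvdef]
          simp only [hcl]
          exact hasDerivAt_pi.mpr (hη' s hs.1)
        exact hd.hasDerivWithinAt)
      (fun s hs => mem_univ _)
      (continuousOn_const (c := (0 : Fin nm → ℝ)))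
      (fun s hs => by
        have : v s (0 : Fin nm → ℝ) = 0 := by rw [hvdef]; simp
        rw [this]
        exact (hasDerivWithinAt_const s (Ici s) (0 : Fin nm → ℝ)))
      (fun s hs => mem_univ _)
      (by
        show η 0 = 0
        show xm 0 - Lm 0 *ᵥ q 0 = 0
        rw [hxm0, hLm0, Matrix.zero_mulVec, sub_zero])
    exact huniq (right_mem_Icc.mpr hT)
  have hxmq : ∀ t, 0 ≤ t → xm t = Lm t *ᵥ q t := by
    intro t ht
    have h := hη0 t ht
    have h2 : xm t - Lm t *ᵥ q t = 0 := h
    exact sub_eq_zero.mp h2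
  -- z = U q is constant
  have hz' : ∀ t, 0 ≤ t → ∀ i, HasDerivAt (fun s => (U s *ᵥ q s) i) 0 t := by
    intro t ht i
    have h1 := mulVec_hasDerivAt (hU t ht) (hq' t ht) i
    have hUdet : IsUnit (U t).det := (hUpos t ht).det_pos.ne'.isUnit
    have hS : S t = ((Le t)ᵀ * Heᵀ * We * He * Le t + (Lm t)ᵀ * Hmᵀ * Wm * Hm * Lm t) *ᵥ q t := by
      show ((Le t)ᵀ * Heᵀ * We * He) *ᵥ xe t + ((Lm t)ᵀ * Hmᵀ * Wm * Hm) *ᵥ xm t = _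
      rw [← hLeq t ht, hxmq t ht]
      simp [Matrix.mulVec_mulVec, Matrix.add_mulVec]
    have hzero : ((Le t)ᵀ * Heᵀ * We * He * Le t + (Lm t)ᵀ * Hmᵀ * Wm * Hm * Lm t) *ᵥ q t
        + U t *ᵥ (-((U t)⁻¹ *ᵥ S t)) = 0 := by
      have hcancel : U t *ᵥ (-((U t)⁻¹ *ᵥ S t)) = -(S t) := by
        rw [Matrix.mulVec_neg]
        rw [Matrix.mulVec_mulVec]
        rw [Matrix.mul_nonsing_inv _ hUdet, Matrix.one_mulVec]
      rw [hcancel, hS]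
      abel
    rw [show (0:ℝ) = (((Le t)ᵀ * Heᵀ * We * He * Le t + (Lm t)ᵀ * Hmᵀ * Wm * Hm * Lm t) *ᵥ q t
        + U t *ᵥ (-((U t)⁻¹ *ᵥ S t))) i from (congrFun hzero i).symm]
    exact h1
  have hconst : ∀ t, 0 ≤ t → U t *ᵥ q t = U 0 *ᵥ q 0 := by
    intro t ht
    funext i
    exact constant_of_has_deriv_right_zero
      (fun s hs => ((hz' s hs.1 i).continuousAt.continuousWithinAt))
      (fun s hs => (hz' s hs.1 i).hasDerivWithinAt) t (right_mem_Icc.mpr ht)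
  intro t ht
  constructor
  · exact hη0 t ht
  · have hUdet : IsUnit (U t).det := (hUpos t ht).det_pos.ne'.isUnit
    show q t = ((U t)⁻¹ * U 0) *ᵥ q 0
    calc q t = (U t)⁻¹ *ᵥ (U t *ᵥ q t) := by
          rw [Matrix.mulVec_mulVec, Matrix.nonsing_inv_mul _ hUdet, Matrix.one_mulVec]
      _ = (U t)⁻¹ *ᵥ (U 0 *ᵥ q 0) := by rw [hconst t ht]
      _ = ((U t)⁻¹ * U 0) *ᵥ q 0 := Matrix.mulVec_mulVec _ _ _
end

section
/- Let r be a positive integer, let U : [0,∞) → Mat(r,r) be continuously differentiable with U(0) symmetric positive definite and U'(t) symmetric positive semidefinite for every t ≥ 0, and suppose the smallest eigenvalue of U(t) tends to +∞ as t → ∞. Let f : [0,∞) → ℝ^r be continuous with ∫₀^∞ ‖f(s)‖ ds < ∞. Then every differentiable solution z : [0,∞) → ℝ^r of z'(t) = − U(t)^{-1} ( U'(t) z(t) + f(t) ) satisfies z(t) → 0 as t → ∞. -/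
open Matrix MeasureTheory Filter

set_option maxHeartbeats 2000000

/-- Forced reduced error dynamics: if `U` is continuously differentiable on `[0,∞)` with
`U 0` symmetric positive definite and symmetric positive semidefinite derivative `U'`,
the smallest eigenvalue of `U t` tends to `+∞` (expressed, for the symmetric matrices
`U t`, by the equivalent Loewner-order condition `∀ c, U t − c·1 ⪰ 0` for all large `t`),
and `f` is continuous on `[0,∞)` with finite integral `∫₀^∞ ‖f‖` (Euclidean norm),
then every differentiable solution of `z' = − U⁻¹ (U' z + f)` tends to `0` at `+∞`. -/
theorem forced_gramian_filtered_error_tendsto_zero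
    (r : ℕ) (hr : 0 < r)
    (U U' : ℝ → Matrix (Fin r) (Fin r) ℝ)
    (hUderiv : ∀ t, 0 ≤ t → ∀ i j, HasDerivAt (fun s => U s i j) (U' t i j) t)
    (hU'cont : ∀ i j, ContinuousOn (fun t => U' t i j) (Set.Ici (0 : ℝ)))
    (hU0 : (U 0).PosDef)
    (hU'pos : ∀ t, 0 ≤ t → (U' t).PosSemidef)
    (hUgrow : ∀ c : ℝ, ∃ T : ℝ, ∀ t, T ≤ t → (U t - c • (1 : Matrix (Fin r) (Fin r) ℝ)).PosSemidef)
    (f : ℝ → Fin r → ℝ)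
    (hfc : ∀ i, ContinuousOn (fun t => f t i) (Set.Ici (0 : ℝ)))
    (hfint : IntegrableOn (fun s => Real.sqrt (∑ i, f s i ^ 2)) (Set.Ici (0 : ℝ)))
    (z : ℝ → Fin r → ℝ)
    (hz : ∀ t, 0 ≤ t → ∀ i, HasDerivAt (fun s => z s i)
      ((-((U t)⁻¹.mulVec ((U' t).mulVec (z t) + f t))) i) t) :
    Tendsto z atTop (nhds 0) := by
  classical
  set nf : ℝ → ℝ := fun s => Real.sqrt (∑ i, f s i ^ 2) with hnf_def
  have hnf_nonneg : ∀ s, 0 ≤ nf s := fun s => Real.sqrt_nonneg _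
  have hnf_cont : ContinuousOn nf (Set.Ici (0 : ℝ)) := by
    apply Real.continuous_sqrt.comp_continuousOn
    exact continuousOn_finset_sum _ fun i _ => (hfc i).pow 2
  -- representation of the quadratic form as a double sum
  have hrep : ∀ (x : Fin r → ℝ) (M : Matrix (Fin r) (Fin r) ℝ),
      x ⬝ᵥ M.mulVec x = ∑ i, ∑ j, x i * M i j * x j := by
    intro x M
    simp [dotProduct, Matrix.mulVec, Finset.mul_sum, mul_assoc]
  -- monotonicity of the quadratic form
  have hq : ∀ (x : Fin r → ℝ) (t : ℝ), 0 ≤ t →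
      x ⬝ᵥ (U 0).mulVec x ≤ x ⬝ᵥ (U t).mulVec x := by
    intro x t ht
    have hderiv : ∀ s ∈ Set.uIcc (0:ℝ) t,
        HasDerivAt (fun s => ∑ i, ∑ j, x i * U s i j * x j)
          (∑ i, ∑ j, x i * U' s i j * x j) s := by
      intro s hs
      rw [Set.uIcc_of_le ht] at hs
      refine HasDerivAt.fun_sum fun i _ => HasDerivAt.fun_sum fun j _ => ?_
      exact ((hUderiv s hs.1 i j).const_mul (x i)).mul_const (x j)
    have hcont : ContinuousOn (fun s => ∑ i, ∑ j, x i * U' s i j * x j)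
        (Set.uIcc (0:ℝ) t) := by
      rw [Set.uIcc_of_le ht]
      refine (continuousOn_finset_sum _ fun i _ => continuousOn_finset_sum _ fun j _ => ?_).mono
        (Set.Icc_subset_Ici_self)
      exact ((hU'cont i j).const_smul (x i)).mul continuousOn_const
    have hint : IntervalIntegrable _ volume 0 t := hcont.intervalIntegrable
    have hftc := intervalIntegral.integral_eq_sub_of_hasDerivAt hderiv hint
    have hnn : 0 ≤ ∫ s in (0:ℝ)..t, ∑ i, ∑ j, x i * U' s i j * x j := by
      apply intervalIntegral.integral_nonneg ht
      intro u hu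
      have h := (hU'pos u hu.1).dotProduct_mulVec_nonneg x
      rw [star_trivial] at h
      rw [← hrep]
      exact h
    rw [hrep x (U 0), hrep x (U t)]
    linarith [hftc ▸ hnn]
  -- positivity of the quadratic form, hence invertibility
  have hdet : ∀ t, 0 ≤ t → IsUnit (U t).det := by
    intro t ht
    rw [isUnit_iff_ne_zero]
    intro h0
    obtain ⟨v, hv, hveq⟩ := (Matrix.exists_mulVec_eq_zero_iff).2 h0
    have h1 : 0 < v ⬝ᵥ (U 0).mulVec v := by
      have := hU0.dotProduct_mulVec_pos hv
      rwa [star_trivial] at this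
    have h2 := hq v t ht
    rw [hveq, dotProduct_zero] at h2
    linarith
  -- w = U z has derivative -f
  have hw : ∀ (i : Fin r) (t : ℝ), 0 ≤ t →
      HasDerivAt (fun s => ((U s).mulVec (z s)) i) (-(f t i)) t := by
    intro i t ht
    have h1 : HasDerivAt (fun s => ∑ j, U s i j * z s j)
        (∑ j, (U' t i j * z t j +
          U t i j * ((-((U t)⁻¹.mulVec ((U' t).mulVec (z t) + f t))) j))) t :=
      HasDerivAt.fun_sum fun j _ => (hUderiv t ht i j).mul (hz t ht j)
    have hfun : (fun s => ((U s).mulVec (z s)) i) = fun s => ∑ j, U s i j * z s j := by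
      funext s; simp [Matrix.mulVec, dotProduct]
    have hval : (∑ j, (U' t i j * z t j +
        U t i j * ((-((U t)⁻¹.mulVec ((U' t).mulVec (z t) + f t))) j))) = -(f t i) := by
      have hUU : (U t).mulVec (-((U t)⁻¹.mulVec ((U' t).mulVec (z t) + f t)))
          = -((U' t).mulVec (z t) + f t) := by
        rw [Matrix.mulVec_neg, Matrix.mulVec_mulVec, Matrix.mul_nonsing_inv _ (hdet t ht),
          Matrix.one_mulVec]
      have e1 : ∑ j, U' t i j * z t j = ((U' t).mulVec (z t)) i := by
        simp [Matrix.mulVec, dotProduct]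
      have e2 : ∑ j, U t i j * ((-((U t)⁻¹.mulVec ((U' t).mulVec (z t) + f t))) j)
          = ((U t).mulVec (-((U t)⁻¹.mulVec ((U' t).mulVec (z t) + f t)))) i := by
        simp [Matrix.mulVec, dotProduct]
      rw [Finset.sum_add_distrib, e1, e2, hUU]
      simp
    rw [hfun]
    rw [← hval]
    exact h1
  -- FTC for w
  set I : ℝ := ∫ s in Set.Ici (0:ℝ), nf s with hI_def
  have hI_nonneg : 0 ≤ I := setIntegral_nonneg measurableSet_Ici fun s _ => hnf_nonneg s
  have hwbound : ∀ t, 0 ≤ t → ∀ i,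
      |((U t).mulVec (z t)) i| ≤ |((U 0).mulVec (z 0)) i| + I := by
    intro t ht i
    have hderiv : ∀ s ∈ Set.uIcc (0:ℝ) t,
        HasDerivAt (fun s => ((U s).mulVec (z s)) i) (-(f s i)) s := by
      intro s hs
      rw [Set.uIcc_of_le ht] at hs
      exact hw i s hs.1
    have hfci : ContinuousOn (fun s => -(f s i)) (Set.uIcc (0:ℝ) t) := by
      rw [Set.uIcc_of_le ht]
      exact ((hfc i).neg).mono Set.Icc_subset_Ici_self
    have hftc := intervalIntegral.integral_eq_sub_of_hasDerivAt hderiv hfci.intervalIntegrable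
    have habs : |∫ s in (0:ℝ)..t, -(f s i)| ≤ I := by
      have h1 : |∫ s in (0:ℝ)..t, -(f s i)| ≤ ∫ s in (0:ℝ)..t, |(-(f s i))| :=
        intervalIntegral.abs_integral_le_integral_abs ht
      have h2 : (∫ s in (0:ℝ)..t, |(-(f s i))|) ≤ ∫ s in (0:ℝ)..t, nf s := by
        apply intervalIntegral.integral_mono_on ht
        · apply ContinuousOn.intervalIntegrable
          rw [Set.uIcc_of_le ht]
          exact ((hfc i).neg).abs.mono Set.Icc_subset_Ici_self
        · apply ContinuousOn.intervalIntegrable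
          rw [Set.uIcc_of_le ht]
          exact hnf_cont.mono Set.Icc_subset_Ici_self
        · intro u _
          rw [abs_neg, ← Real.sqrt_sq_eq_abs]
          apply Real.sqrt_le_sqrt
          exact Finset.single_le_sum (fun j _ => sq_nonneg (f u j)) (Finset.mem_univ i)
      have h3 : (∫ s in (0:ℝ)..t, nf s) ≤ I := by
        rw [intervalIntegral.integral_of_le ht]
        apply setIntegral_mono_set hfint
        · exact Filter.Eventually.of_forall fun s => hnf_nonneg s
        · exact HasSubset.Subset.eventuallyLE (fun x hx => le_of_lt hx.1)
      linarith
    have := hftc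
    -- w t i = w 0 i + ∫
    have heq : ((U t).mulVec (z t)) i = ((U 0).mulVec (z 0)) i + ∫ s in (0:ℝ)..t, -(f s i) := by
      linarith [hftc]
    rw [heq]
    calc |((U 0).mulVec (z 0)) i + ∫ s in (0:ℝ)..t, -(f s i)|
        ≤ |((U 0).mulVec (z 0)) i| + |∫ s in (0:ℝ)..t, -(f s i)| := abs_add_le _ _
      _ ≤ |((U 0).mulVec (z 0)) i| + I := by linarith
  -- a uniform bound on the Euclidean norm squared of w
  set C : ℝ := Real.sqrt (∑ i, (|((U 0).mulVec (z 0)) i| + I) ^ 2) with hC_def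
  have hC_nonneg : 0 ≤ C := Real.sqrt_nonneg _
  have hwC : ∀ t, 0 ≤ t → ∑ i, (((U t).mulVec (z t)) i) ^ 2 ≤ C ^ 2 := by
    intro t ht
    rw [hC_def, Real.sq_sqrt (Finset.sum_nonneg fun i _ => sq_nonneg _)]
    apply Finset.sum_le_sum
    intro i _
    have h := hwbound t ht i
    calc (((U t).mulVec (z t)) i) ^ 2 = |((U t).mulVec (z t)) i| ^ 2 := (sq_abs _).symm
      _ ≤ (|((U 0).mulVec (z 0)) i| + I) ^ 2 := by
          apply pow_le_pow_left₀ (abs_nonneg _) h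
  -- final convergence
  rw [tendsto_pi_nhds]
  intro i
  rw [Metric.tendsto_atTop]
  intro ε hε
  obtain ⟨T, hT⟩ := hUgrow (C / ε + 1)
  have hc_pos : 0 < C / ε + 1 := add_pos_of_nonneg_of_pos (div_nonneg hC_nonneg hε.le) one_pos
  refine ⟨max T 0, fun t htT => ?_⟩
  have ht0 : 0 ≤ t := le_trans (le_max_right T 0) htT
  have htT' : T ≤ t := le_trans (le_max_left T 0) htT
  set c : ℝ := C / ε + 1
  set S : ℝ := ∑ j, z t j ^ 2 with hS_def
  have hS_nonneg : 0 ≤ S := Finset.sum_nonneg fun j _ => sq_nonneg _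
  -- c * S ≤ z ⬝ᵥ U z
  have hlow : c * S ≤ z t ⬝ᵥ (U t).mulVec (z t) := by
    have h := (hT t htT').dotProduct_mulVec_nonneg (z t)
    rw [star_trivial] at h
    have hexp : (U t - c • (1 : Matrix (Fin r) (Fin r) ℝ)) *ᵥ z t = (U t) *ᵥ z t - c • z t := by
      rw [Matrix.sub_mulVec, Matrix.smul_mulVec, Matrix.one_mulVec]
    rw [hexp, dotProduct_sub, dotProduct_smul, smul_eq_mul] at h
    have hzz : z t ⬝ᵥ z t = S := by
      simp [dotProduct, hS_def, sq]
    rw [hzz] at h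
    linarith [h]
  -- Cauchy-Schwarz: z ⬝ᵥ U z = z ⬝ᵥ w ≤ sqrt S * C
  have hup : z t ⬝ᵥ (U t).mulVec (z t) ≤ Real.sqrt S * C := by
    set w := (U t).mulVec (z t) with hw_def
    have hcs : (z t ⬝ᵥ w) ^ 2 ≤ S * ∑ j, w j ^ 2 := by
      have := Finset.sum_mul_sq_le_sq_mul_sq Finset.univ (z t) w
      simpa [dotProduct, hS_def] using this
    have h1 : z t ⬝ᵥ w ≤ |z t ⬝ᵥ w| := le_abs_self _
    have h2 : |z t ⬝ᵥ w| = Real.sqrt ((z t ⬝ᵥ w) ^ 2) := (Real.sqrt_sq_eq_abs _).symm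
    have h3 : Real.sqrt ((z t ⬝ᵥ w) ^ 2) ≤ Real.sqrt (S * C ^ 2) := by
      apply Real.sqrt_le_sqrt
      calc (z t ⬝ᵥ w) ^ 2 ≤ S * ∑ j, w j ^ 2 := hcs
        _ ≤ S * C ^ 2 := by
            apply mul_le_mul_of_nonneg_left (hwC t ht0) hS_nonneg
    have h4 : Real.sqrt (S * C ^ 2) = Real.sqrt S * C := by
      rw [Real.sqrt_mul hS_nonneg, Real.sqrt_sq hC_nonneg]
    linarith [h1, h2 ▸ (h4 ▸ h3)]
  -- conclude sqrt S ≤ C / c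
  have hsqrtS : Real.sqrt S ≤ C / c := by
    rcases eq_or_lt_of_le (Real.sqrt_nonneg S) with h0 | h0
    · rw [← h0]; exact div_nonneg hC_nonneg hc_pos.le
    · have hSs : S = Real.sqrt S * Real.sqrt S := (Real.mul_self_sqrt hS_nonneg).symm
      have : c * (Real.sqrt S * Real.sqrt S) ≤ Real.sqrt S * C := by
        rw [← hSs]; linarith
      have hc2 : c * Real.sqrt S ≤ C := by
        have := (mul_le_mul_iff_left₀ h0).1 (by linarith [this] : (c * Real.sqrt S) * Real.sqrt S ≤ C * Real.sqrt S)
        exact this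
      rw [le_div_iff₀ hc_pos]
      linarith [hc2]
  have hCc : C / c < ε := by
    rw [div_lt_iff₀ hc_pos]
    have : ε * (C / ε + 1) = C + ε := by field_simp
    rw [this]
    linarith
  have hzi : |z t i| ≤ Real.sqrt S := by
    rw [← Real.sqrt_sq_eq_abs]
    apply Real.sqrt_le_sqrt
    exact Finset.single_le_sum (fun j _ => sq_nonneg (z t j)) (Finset.mem_univ i)
  have : dist (z t i) ((0 : Fin r → ℝ) i) = |z t i| := by
    simp [Real.dist_eq]
  rw [this]
  linarith
end

section
/- In the coupled observer error system, assume additionally that: (i) sup_{t≥0} ‖L^e(t)‖ < ∞ and sup_{t≥0} ‖L^m(t)‖ < ∞; (ii) the smallest eigenvalue of U(t) tends to +∞ as t → ∞; and (iii) there exist constants c > 0 and λ > 0 such that ‖δη(t)‖ ≤ c e^{−λ t} for all t ≥ 0 (exponential convergence of the mechanical Luenberger error). Then the linearized estimation errors of the coupled observer converge: x̃^e(t) → 0 and x̃^m(t) → 0 as t → ∞. -/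
open Matrix Filter

private theorem cobs_det_diffAt {n : ℕ} (M : ℝ → Matrix (Fin n) (Fin n) ℝ) (t : ℝ)
    (h : ∀ i j, DifferentiableAt ℝ (fun s => M s i j) t) :
    DifferentiableAt ℝ (fun s => (M s).det) t := by
  simp only [Matrix.det_apply']
  exact DifferentiableAt.fun_sum fun σ _ =>
    (DifferentiableAt.fun_finsetProd (fun i _ => h (σ i) i)).const_mul _

private theorem cobs_inv_entry_diffAt {n : ℕ} (M : ℝ → Matrix (Fin n) (Fin n) ℝ) (t : ℝ)
    (h : ∀ i j, DifferentiableAt ℝ (fun s => M s i j) t) (hd : (M t).det ≠ 0) (i j : Fin n) :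
    DifferentiableAt ℝ (fun s => (M s)⁻¹ i j) t := by
  have heq : ∀ s, (M s)⁻¹ i j = ((M s).det)⁻¹ * (M s).adjugate i j := by
    intro s
    rw [Matrix.inv_def, Matrix.smul_apply, Ring.inverse_eq_inv', smul_eq_mul]
  simp only [heq]
  have hadj : DifferentiableAt ℝ (fun s => (M s).adjugate i j) t := by
    simp only [Matrix.adjugate_apply]
    refine cobs_det_diffAt _ t fun a b => ?_
    rcases eq_or_ne a j with rfl | hne
    · simp only [Matrix.updateRow_self]
      exact differentiableAt_const _
    · simp only [Matrix.updateRow_ne hne]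
      exact h a b
  exact ((cobs_det_diffAt M t h).inv hd).mul hadj

private theorem cobs_deriv_zero_of_const_Ici {P : ℝ → ℝ} {d t c : ℝ} (ht : 0 ≤ t)
    (hP : HasDerivAt P d t) (hc : ∀ s, 0 ≤ s → P s = c) : d = 0 := by
  have h1 : HasDerivWithinAt (fun _ : ℝ => c) d (Set.Ici 0) t :=
    hP.hasDerivWithinAt.congr (fun s hs => (hc s hs).symm) (hc t ht).symm
  have h2 : HasDerivWithinAt (fun _ : ℝ => c) 0 (Set.Ici 0) t :=
    (hasDerivAt_const t c).hasDerivWithinAt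
  have hu := uniqueDiffOn_Ici (0:ℝ) t ht
  exact (h1.derivWithin hu).symm.trans (h2.derivWithin hu)

private theorem cobs_exp_hasDerivAt (lam : ℝ) (hlam : lam ≠ 0) (s : ℝ) :
    HasDerivAt (fun u => -Real.exp (-(lam * u)) / lam) (Real.exp (-(lam * s))) s := by
  have h1 : HasDerivAt (fun u : ℝ => -(lam * u)) (-lam) s := by
    simpa using ((hasDerivAt_id s).const_mul lam).fun_neg
  have h2 := (Real.hasDerivAt_exp (-(lam * s))).comp s h1
  have h3 := h2.fun_neg.div_const lam
  refine h3.congr_deriv ?_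
  field_simp

private theorem cobs_exp_integral_bound {g : ℝ → ℝ} {Cg lam t : ℝ} (hCg : 0 ≤ Cg)
    (hlam : 0 < lam) (ht : 0 ≤ t) (hint : IntervalIntegrable g MeasureTheory.volume 0 t)
    (hb : ∀ s, 0 ≤ s → |g s| ≤ Cg * Real.exp (-(lam * s))) :
    |∫ s in (0:ℝ)..t, g s| ≤ Cg / lam := by
  have h1 : |∫ s in (0:ℝ)..t, g s| ≤ ∫ s in (0:ℝ)..t, |g s| :=
    intervalIntegral.abs_integral_le_integral_abs ht
  have hcont : Continuous fun s => Real.exp (-(lam * s)) := by continuity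
  have h2 : ∫ s in (0:ℝ)..t, |g s| ≤ ∫ s in (0:ℝ)..t, Cg * Real.exp (-(lam * s)) := by
    refine intervalIntegral.integral_mono_on ht hint.abs
      ((continuous_const.mul hcont).intervalIntegrable 0 t) ?_
    intro s hs; exact hb s hs.1
  have hFTC : ∫ s in (0:ℝ)..t, Real.exp (-(lam * s))
      = -Real.exp (-(lam * t)) / lam - -Real.exp (-(lam * 0)) / lam :=
    intervalIntegral.integral_eq_sub_of_hasDerivAt
      (fun s _ => cobs_exp_hasDerivAt lam (ne_of_gt hlam) s) (hcont.intervalIntegrable 0 t)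
  have h3 : ∫ s in (0:ℝ)..t, Cg * Real.exp (-(lam * s))
      = Cg * (-Real.exp (-(lam * t)) / lam - -Real.exp (-(lam * 0)) / lam) := by
    rw [intervalIntegral.integral_const_mul, hFTC]
  have h4 : Cg * (-Real.exp (-(lam * t)) / lam - -Real.exp (-(lam * 0)) / lam) ≤ Cg / lam := by
    rw [mul_zero, neg_zero, Real.exp_zero]
    have he : 0 < Real.exp (-(lam * t)) := Real.exp_pos _
    have hinv : 0 < lam⁻¹ := inv_pos.mpr hlam
    rw [div_eq_mul_inv, div_eq_mul_inv, div_eq_mul_inv]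
    nlinarith [mul_nonneg (mul_nonneg he.le hinv.le) hCg]
  linarith

private theorem cobs_mulVec_hasDerivAt {n m : ℕ} {M : ℝ → Matrix (Fin n) (Fin m) ℝ}
    {M' : Matrix (Fin n) (Fin m) ℝ} {v : ℝ → Fin m → ℝ} {v' : Fin m → ℝ} {t : ℝ} (i : Fin n)
    (hM : ∀ j, HasDerivAt (fun s => M s i j) (M' i j) t)
    (hv : ∀ j, HasDerivAt (fun s => v s j) (v' j) t) :
    HasDerivAt (fun s => (M s).mulVec (v s) i) ((M'.mulVec (v t) + (M t).mulVec v') i) t := by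
  have h : HasDerivAt (fun s => ∑ j, M s i j * v s j)
      (∑ j, (M' i j * v t j + M t i j * v' j)) t :=
    HasDerivAt.fun_sum fun j _ => (hM j).mul (hv j)
  simpa [Matrix.mulVec, dotProduct, Finset.sum_add_distrib] using h

private theorem cobs_mulVec_diffAt {n m : ℕ} {M : ℝ → Matrix (Fin n) (Fin m) ℝ}
    {v : ℝ → Fin m → ℝ} {t : ℝ} (i : Fin n)
    (hM : ∀ j, DifferentiableAt ℝ (fun s => M s i j) t)
    (hv : ∀ j, DifferentiableAt ℝ (fun s => v s j) t) :
    DifferentiableAt ℝ (fun s => (M s).mulVec (v s) i) t := by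
  have h : DifferentiableAt ℝ (fun s => ∑ j, M s i j * v s j) t :=
    DifferentiableAt.fun_sum fun j _ => (hM j).mul (hv j)
  simpa [Matrix.mulVec, dotProduct] using h


set_option maxHeartbeats 1600000 in
/-- Convergence of the coupled observer: if `Lᵉ` and `Lᵐ` are bounded on `[0,∞)`,
the smallest eigenvalue of `U t` tends to `+∞` (expressed, for the symmetric matrices
`U t`, by the equivalent Loewner condition `∀ c, U t − c·1 ⪰ 0` for large `t`), and the
transformed mechanical error `δη = x̃ᵐ − Lᵐ (Lᵉ)⁻¹ x̃ᵉ` converges exponentially to `0`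
(Euclidean norm), then the linearized estimation errors converge: `x̃ᵉ → 0` and
`x̃ᵐ → 0` as `t → ∞`. -/
theorem coupled_observer_errors_tendsto_zero
    (ne nm me mm : ℕ) (hne : 0 < ne) (hnm : 0 < nm) (hme : 0 < me) (hmm : 0 < mm)
    (Ae : ℝ → Matrix (Fin ne) (Fin ne) ℝ)
    (Am : ℝ → Matrix (Fin nm) (Fin nm) ℝ)
    (B : ℝ → Matrix (Fin nm) (Fin ne) ℝ)
    (K : ℝ → Matrix (Fin nm) (Fin mm) ℝ)
    (hAe : ∀ i j, Continuous fun t => Ae t i j)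
    (hAm : ∀ i j, Continuous fun t => Am t i j)
    (hB : ∀ i j, Continuous fun t => B t i j)
    (hK : ∀ i j, Continuous fun t => K t i j)
    (He : Matrix (Fin me) (Fin ne) ℝ) (Hm : Matrix (Fin mm) (Fin nm) ℝ)
    (We : Matrix (Fin me) (Fin me) ℝ) (Wm : Matrix (Fin mm) (Fin mm) ℝ)
    (hWe : We.PosSemidef) (hWm : Wm.PosSemidef)
    (Le : ℝ → Matrix (Fin ne) (Fin ne) ℝ)
    (hLe : ∀ t, 0 ≤ t → ∀ i j, HasDerivAt (fun s => Le s i j) ((Ae t * Le t) i j) t)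
    (hLe0 : Le 0 = 1)
    (hLeInv : ∀ t, 0 ≤ t → IsUnit (Le t).det)
    (Lm : ℝ → Matrix (Fin nm) (Fin ne) ℝ)
    (hLm : ∀ t, 0 ≤ t → ∀ i j, HasDerivAt (fun s => Lm s i j)
      (((Am t - K t * Hm) * Lm t + B t * Le t) i j) t)
    (hLm0 : Lm 0 = 0)
    (U : ℝ → Matrix (Fin ne) (Fin ne) ℝ)
    (hU : ∀ t, 0 ≤ t → ∀ i j, HasDerivAt (fun s => U s i j)
      (((Le t)ᵀ * Heᵀ * We * He * Le t + (Lm t)ᵀ * Hmᵀ * Wm * Hm * Lm t) i j) t)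
    (hU0 : (U 0).PosDef)
    (hUpos : ∀ t, 0 ≤ t → (U t).PosDef)
    (xe : ℝ → Fin ne → ℝ) (xm : ℝ → Fin nm → ℝ)
    (hxe : ∀ t, 0 ≤ t → ∀ i, HasDerivAt (fun s => xe s i)
      (((Ae t).mulVec (xe t) - (Le t * (U t)⁻¹).mulVec
        (((Le t)ᵀ * Heᵀ * We * He).mulVec (xe t)
          + ((Lm t)ᵀ * Hmᵀ * Wm * Hm).mulVec (xm t))) i) t)
    (hxm : ∀ t, 0 ≤ t → ∀ i, HasDerivAt (fun s => xm s i)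
      (((Am t - K t * Hm).mulVec (xm t) + (B t).mulVec (xe t)
        - (Lm t * (U t)⁻¹).mulVec
          (((Le t)ᵀ * Heᵀ * We * He).mulVec (xe t)
            + ((Lm t)ᵀ * Hmᵀ * Wm * Hm).mulVec (xm t))) i) t)
    (hLeBdd : ∃ CL : ℝ, ∀ t, 0 ≤ t → ∀ i j, |Le t i j| ≤ CL)
    (hLmBdd : ∃ CL : ℝ, ∀ t, 0 ≤ t → ∀ i j, |Lm t i j| ≤ CL)
    (hUgrow : ∀ c : ℝ, ∃ T : ℝ, ∀ t, T ≤ t →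
      (U t - c • (1 : Matrix (Fin ne) (Fin ne) ℝ)).PosSemidef)
    (hEta : ∃ C lam : ℝ, 0 < C ∧ 0 < lam ∧ ∀ t, 0 ≤ t →
      Real.sqrt (∑ i, (xm t - (Lm t).mulVec ((Le t)⁻¹.mulVec (xe t))) i ^ 2)
        ≤ C * Real.exp (-(lam * t))) :
    Tendsto xe atTop (nhds 0) ∧ Tendsto xm atTop (nhds 0) := by

  classical
  -- notation
  set N : ℝ → Matrix (Fin ne) (Fin ne) ℝ := fun t => (Le t)⁻¹ with hNdef
  set μ : ℝ → Fin ne → ℝ := fun t => (N t).mulVec (xe t) with hμdef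
  set η : ℝ → Fin nm → ℝ := fun t => xm t - (Lm t).mulVec (μ t) with hηdef
  set z : ℝ → Fin ne → ℝ := fun t => (U t).mulVec (μ t) with hzdef
  set G : ℝ → Matrix (Fin ne) (Fin nm) ℝ := fun t => (Lm t)ᵀ * Hmᵀ * Wm * Hm with hGdef
  set Sv : ℝ → Fin ne → ℝ := fun t => ((Le t)ᵀ * Heᵀ * We * He).mulVec (xe t)
      + ((Lm t)ᵀ * Hmᵀ * Wm * Hm).mulVec (xm t) with hSvdef
  have hdet : ∀ t, 0 ≤ t → (Le t).det ≠ 0 := fun t ht => (hLeInv t ht).ne_zero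
  have hNLe : ∀ t, 0 ≤ t → N t * Le t = 1 := fun t ht => Matrix.nonsing_inv_mul _ (hLeInv t ht)
  have hLeN : ∀ t, 0 ≤ t → Le t * N t = 1 := fun t ht => Matrix.mul_nonsing_inv _ (hLeInv t ht)
  have hND : ∀ t, 0 ≤ t → ∀ i j, DifferentiableAt ℝ (fun s => N s i j) t := fun t ht i j =>
    cobs_inv_entry_diffAt Le t (fun i j => (hLe t ht i j).differentiableAt) (hdet t ht) i j
  set D : ℝ → Matrix (Fin ne) (Fin ne) ℝ :=
    fun t => Matrix.of fun i j => deriv (fun s => N s i j) t with hDdef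
  have hNd : ∀ t, 0 ≤ t → ∀ i j, HasDerivAt (fun s => N s i j) (D t i j) t :=
    fun t ht i j => (hND t ht i j).hasDerivAt
  -- derivative of the inverse
  have hDeq : ∀ t, 0 ≤ t → D t = -(N t * Ae t) := by
    intro t ht
    have key : D t * Le t + N t * (Ae t * Le t) = 0 := by
      ext i j
      have hP : HasDerivAt (fun s => ∑ k, N s i k * Le s k j)
          (∑ k, (D t i k * Le t k j + N t i k * (Ae t * Le t) k j)) t :=
        HasDerivAt.fun_sum fun k _ => (hNd t ht i k).mul (hLe t ht k j)
      have hconst : ∀ s, 0 ≤ s →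
          (∑ k, N s i k * Le s k j) = (1 : Matrix (Fin ne) (Fin ne) ℝ) i j := by
        intro s hs
        rw [← Matrix.mul_apply, hNLe s hs]
      have h0 := cobs_deriv_zero_of_const_Ici ht hP hconst
      simpa [Matrix.add_apply, Matrix.mul_apply, Finset.sum_add_distrib] using h0
    have h2 : D t * Le t = -(N t * (Ae t * Le t)) := by
      rwa [add_eq_zero_iff_eq_neg] at key
    have h3 := congrArg (fun M => M * N t) h2
    rw [Matrix.mul_assoc (D t), hLeN t ht, Matrix.mul_one, Matrix.neg_mul,
      Matrix.mul_assoc (N t), Matrix.mul_assoc (Ae t), hLeN t ht, Matrix.mul_one] at h3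
    exact h3
  -- derivative of μ
  have hxeμ : ∀ t, 0 ≤ t → xe t = (Le t).mulVec (μ t) := by
    intro t ht
    rw [hμdef]
    simp only
    rw [Matrix.mulVec_mulVec, hLeN t ht, Matrix.one_mulVec]
  have hμd : ∀ t, 0 ≤ t → ∀ j,
      HasDerivAt (fun s => μ s j) ((-((U t)⁻¹.mulVec (Sv t))) j) t := by
    intro t ht j
    have h := cobs_mulVec_hasDerivAt j (fun k => hNd t ht j k) (fun k => hxe t ht k)
    have hval : (D t).mulVec (xe t) + (N t).mulVec
        ((Ae t).mulVec (xe t) - (Le t * (U t)⁻¹).mulVec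
          (((Le t)ᵀ * Heᵀ * We * He).mulVec (xe t)
            + ((Lm t)ᵀ * Hmᵀ * Wm * Hm).mulVec (xm t)))
        = -((U t)⁻¹.mulVec (Sv t)) := by
      rw [hDeq t ht, Matrix.neg_mulVec, Matrix.mulVec_sub, Matrix.mulVec_mulVec,
        Matrix.mulVec_mulVec, ← Matrix.mul_assoc, hNLe t ht, Matrix.one_mul, hSvdef]
      abel
    rw [← hval]
    exact h
  -- derivative of z
  have hUdet : ∀ t, 0 ≤ t → IsUnit (U t).det :=
    fun t ht => isUnit_iff_ne_zero.mpr (ne_of_gt (hUpos t ht).det_pos)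
  have hxmη : ∀ t, xm t = η t + (Lm t).mulVec (μ t) := by
    intro t
    rw [hηdef]
    simp
  have hzd : ∀ t, 0 ≤ t → ∀ i,
      HasDerivAt (fun s => z s i) ((-(G t).mulVec (η t)) i) t := by
    intro t ht i
    have h := cobs_mulVec_hasDerivAt i (fun j => hU t ht i j) (fun j => hμd t ht j)
    have hval : ((Le t)ᵀ * Heᵀ * We * He * Le t
          + (Lm t)ᵀ * Hmᵀ * Wm * Hm * Lm t).mulVec (μ t)
        + (U t).mulVec (-((U t)⁻¹.mulVec (Sv t))) = -(G t).mulVec (η t) := by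
      have hUU1 : U t * (U t)⁻¹ = 1 := Matrix.mul_nonsing_inv _ (hUdet t ht)
      have hUU2 : (U t).mulVec (-((U t)⁻¹.mulVec (Sv t))) = -(Sv t) := by
        rw [Matrix.mulVec_neg, Matrix.mulVec_mulVec (Sv t) (U t) (U t)⁻¹, hUU1,
          Matrix.one_mulVec]
      rw [hUU2]
      have hSveq : Sv t = ((Le t)ᵀ * Heᵀ * We * He * Le t
          + (Lm t)ᵀ * Hmᵀ * Wm * Hm * Lm t).mulVec (μ t) + (G t).mulVec (η t) := by
        rw [hSvdef]
        simp only
        rw [hxeμ t ht]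
        conv_lhs => rw [hxmη t]
        have e1 : ((Le t)ᵀ * Heᵀ * We * He) *ᵥ (Le t *ᵥ μ t)
            = ((Le t)ᵀ * Heᵀ * We * He * Le t) *ᵥ μ t := Matrix.mulVec_mulVec _ _ _
        have e2 : ((Lm t)ᵀ * Hmᵀ * Wm * Hm) *ᵥ (η t + Lm t *ᵥ μ t)
            = ((Lm t)ᵀ * Hmᵀ * Wm * Hm) *ᵥ η t
              + ((Lm t)ᵀ * Hmᵀ * Wm * Hm * Lm t) *ᵥ μ t := by
          rw [Matrix.mulVec_add]
          congr 1
          exact Matrix.mulVec_mulVec _ _ _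
        rw [e1, e2]
        have e3 : ((Le t)ᵀ * Heᵀ * We * He * Le t + (Lm t)ᵀ * Hmᵀ * Wm * Hm * Lm t) *ᵥ μ t
            = ((Le t)ᵀ * Heᵀ * We * He * Le t) *ᵥ μ t
              + ((Lm t)ᵀ * Hmᵀ * Wm * Hm * Lm t) *ᵥ μ t := Matrix.add_mulVec _ _ _
        rw [e3, hGdef]
        abel
      rw [hSveq]
      abel
    rw [← hval]
    exact h
  -- differentiability / continuity of entries on [0,∞)
  have hμD : ∀ t, 0 ≤ t → ∀ j, DifferentiableAt ℝ (fun s => μ s j) t :=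
    fun t ht j => (hμd t ht j).differentiableAt
  have hηD : ∀ t, 0 ≤ t → ∀ i, DifferentiableAt ℝ (fun s => η s i) t := by
    intro t ht i
    rw [hηdef]
    simp only [Pi.sub_apply]
    exact ((hxm t ht i).differentiableAt).sub
      (cobs_mulVec_diffAt i (fun j => (hLm t ht i j).differentiableAt) (hμD t ht))
  have hgD : ∀ t, 0 ≤ t → ∀ i, DifferentiableAt ℝ (fun s => (-(G s).mulVec (η s)) i) t := by
    intro t ht i
    simp only [Pi.neg_apply]
    refine DifferentiableAt.neg ?_
    refine cobs_mulVec_diffAt i (fun j => ?_) (hηD t ht)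
    rw [hGdef]
    simp only
    have hGQ : ∀ s, ((Lm s)ᵀ * Hmᵀ * Wm * Hm) i j = ∑ k, Lm s k i * (Hmᵀ * Wm * Hm) k j := by
      intro s
      rw [Matrix.mul_assoc, Matrix.mul_assoc, ← Matrix.mul_assoc Hmᵀ Wm Hm, Matrix.mul_apply]
      simp [Matrix.transpose_apply]
    simp only [hGQ]
    exact DifferentiableAt.fun_sum fun k _ => ((hLm t ht k i).differentiableAt).mul_const _
  -- quantitative bounds
  obtain ⟨CL, hCL⟩ := hLmBdd
  obtain ⟨C, lam, hC, hlam, hη⟩ := hEta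
  have hCL0 : 0 ≤ CL := le_trans (abs_nonneg _) (hCL 0 le_rfl ⟨0, hnm⟩ ⟨0, hne⟩)
  set Q : Matrix (Fin nm) (Fin nm) ℝ := Hmᵀ * Wm * Hm with hQdef
  set CQ : ℝ := ∑ a, ∑ b, |Q a b| with hCQdef
  have hCQ0 : 0 ≤ CQ := Finset.sum_nonneg fun _ _ => Finset.sum_nonneg fun _ _ => abs_nonneg _
  have hCQ : ∀ a b, |Q a b| ≤ CQ := by
    intro a b
    calc |Q a b| ≤ ∑ b', |Q a b'| :=
          Finset.single_le_sum (f := fun b' => |Q a b'|)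
            (fun _ _ => abs_nonneg _) (Finset.mem_univ b)
    _ ≤ CQ := by
        rw [hCQdef]
        exact Finset.single_le_sum (f := fun a' => ∑ b', |Q a' b'|)
          (fun _ _ => Finset.sum_nonneg fun _ _ => abs_nonneg _) (Finset.mem_univ a)
  have hGb : ∀ t, 0 ≤ t → ∀ i j, |G t i j| ≤ nm * (CL * CQ) := by
    intro t ht i j
    have hGQ : G t i j = ∑ k, Lm t k i * Q k j := by
      rw [hGdef, hQdef]
      simp only
      rw [Matrix.mul_assoc, Matrix.mul_assoc, ← Matrix.mul_assoc Hmᵀ Wm Hm, Matrix.mul_apply]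
      simp [Matrix.transpose_apply]
    rw [hGQ]
    calc |∑ k, Lm t k i * Q k j| ≤ ∑ k, |Lm t k i * Q k j| := Finset.abs_sum_le_sum_abs _ _
    _ ≤ ∑ _k : Fin nm, CL * CQ := by
        refine Finset.sum_le_sum fun k _ => ?_
        rw [abs_mul]
        exact mul_le_mul (hCL t ht k i) (hCQ k j) (abs_nonneg _) hCL0
    _ = nm * (CL * CQ) := by
        rw [Finset.sum_const, Finset.card_univ, Fintype.card_fin, nsmul_eq_mul]
  have hηb : ∀ t, 0 ≤ t → ∀ j, |η t j| ≤ C * Real.exp (-(lam * t)) := by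
    intro t ht j
    have h1 : |η t j| ≤ Real.sqrt (∑ i, (η t i) ^ 2) := by
      rw [← Real.sqrt_sq_eq_abs (η t j)]
      exact Real.sqrt_le_sqrt (Finset.single_le_sum (f := fun i => η t i ^ 2)
        (fun i _ => sq_nonneg _) (Finset.mem_univ j))
    exact le_trans h1 (hη t ht)
  set Cg : ℝ := nm * (nm * (CL * CQ) * C) with hCgdef
  have hCg0 : 0 ≤ Cg := by
    have h1 : (0:ℝ) ≤ nm * (CL * CQ) := by positivity
    rw [hCgdef]; positivity
  have hgb : ∀ t, 0 ≤ t → ∀ i, |(-(G t).mulVec (η t)) i| ≤ Cg * Real.exp (-(lam * t)) := by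
    intro t ht i
    have hrw : (-(G t).mulVec (η t)) i = -(∑ j, G t i j * η t j) := by
      simp [Matrix.mulVec, dotProduct]
    rw [hrw, abs_neg]
    calc |∑ j, G t i j * η t j| ≤ ∑ j, |G t i j * η t j| := Finset.abs_sum_le_sum_abs _ _
    _ ≤ ∑ _j : Fin nm, nm * (CL * CQ) * (C * Real.exp (-(lam * t))) := by
        refine Finset.sum_le_sum fun j _ => ?_
        rw [abs_mul]
        exact mul_le_mul (hGb t ht i j) (hηb t ht j) (abs_nonneg _) (by positivity)
    _ = Cg * Real.exp (-(lam * t)) := by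
        rw [Finset.sum_const, Finset.card_univ, Fintype.card_fin, nsmul_eq_mul, hCgdef]
        ring
  -- z is bounded on [0,∞)
  have hzb : ∀ t, 0 ≤ t → ∀ i, |z t i| ≤ |z 0 i| + Cg / lam := by
    intro t ht i
    have hIcc : ∀ x ∈ Set.uIcc (0:ℝ) t, 0 ≤ x := by
      intro x hx
      rw [Set.uIcc_of_le ht] at hx
      exact hx.1
    have hcontOn : ContinuousOn (fun s => (-(G s).mulVec (η s)) i) (Set.uIcc 0 t) :=
      fun x hx => ((hgD x (hIcc x hx) i).continuousAt).continuousWithinAt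
    have hint : IntervalIntegrable (fun s => (-(G s).mulVec (η s)) i)
        MeasureTheory.volume 0 t := hcontOn.intervalIntegrable
    have hFTC : ∫ s in (0:ℝ)..t, (-(G s).mulVec (η s)) i = z t i - z 0 i :=
      intervalIntegral.integral_eq_sub_of_hasDerivAt
        (fun x hx => hzd x (hIcc x hx) i) hint
    have hib : |∫ s in (0:ℝ)..t, (-(G s).mulVec (η s)) i| ≤ Cg / lam :=
      cobs_exp_integral_bound hCg0 hlam ht hint (fun s hs => hgb s hs i)
    rw [hFTC] at hib
    have habs := abs_sub_abs_le_abs_sub (z t i) (z 0 i)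
    have h2 : |z t i| - |z 0 i| ≤ Cg / lam := le_trans habs hib
    linarith
  set B2 : ℝ := ∑ i, (|z 0 i| + Cg / lam) ^ 2 with hB2def
  have hB20 : 0 ≤ B2 := Finset.sum_nonneg fun _ _ => sq_nonneg _
  have hB2 : ∀ t, 0 ≤ t → (∑ i, z t i ^ 2) ≤ B2 := by
    intro t ht
    refine Finset.sum_le_sum fun i _ => ?_
    have h1 := hzb t ht i
    have h2 : (0:ℝ) ≤ |z 0 i| + Cg / lam := le_trans (abs_nonneg _) h1
    calc z t i ^ 2 = |z t i| ^ 2 := (sq_abs _).symm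
    _ ≤ (|z 0 i| + Cg / lam) ^ 2 := pow_le_pow_left₀ (abs_nonneg _) h1 2
  -- μ tends to 0
  have hμ0 : ∀ j, Tendsto (fun t => μ t j) atTop (nhds 0) := by
    intro j
    rw [Metric.tendsto_atTop]
    intro ε hε
    set c : ℝ := (Real.sqrt B2 + 1) / ε with hcdef
    have hc : 0 < c := by
      rw [hcdef]
      positivity
    obtain ⟨T, hT⟩ := hUgrow c
    refine ⟨max T 0, fun t ht' => ?_⟩
    have ht0 : 0 ≤ t := le_trans (le_max_right _ _) ht'
    have htT : T ≤ t := le_trans (le_max_left _ _) ht'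
    have hps := (hT t htT).dotProduct_mulVec_nonneg (μ t)
    have key : c * (∑ i, μ t i ^ 2) ≤ ∑ i, μ t i * z t i := by
      have hexp : (U t - c • (1 : Matrix (Fin ne) (Fin ne) ℝ)).mulVec (μ t)
          = z t - c • μ t := by
        rw [Matrix.sub_mulVec, Matrix.smul_mulVec, Matrix.one_mulVec, hzdef]
      rw [hexp] at hps
      have hmm2 : (μ t) ⬝ᵥ (μ t) = ∑ i, μ t i ^ 2 := by
        simp [dotProduct, sq]
      have hmz : (μ t) ⬝ᵥ (z t) = ∑ i, μ t i * z t i := rfl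
      have hdot : star (μ t) ⬝ᵥ (z t - c • μ t)
          = (∑ i, μ t i * z t i) - c * (∑ i, μ t i ^ 2) := by
        rw [star_trivial, dotProduct_sub, dotProduct_smul, smul_eq_mul,
          hmm2, hmz]
      rw [hdot] at hps
      linarith
    have hcs : (∑ i, μ t i * z t i) ^ 2 ≤ (∑ i, μ t i ^ 2) * (∑ i, z t i ^ 2) :=
      Finset.sum_mul_sq_le_sq_mul_sq Finset.univ _ _
    have hP0 : (0:ℝ) ≤ ∑ i, μ t i ^ 2 := Finset.sum_nonneg fun _ _ => sq_nonneg _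
    have hPB : (∑ i, μ t i ^ 2) ≤ B2 / c ^ 2 := by
      rcases eq_or_lt_of_le hP0 with h | h
      · rw [← h]
        positivity
      · have h2 : (∑ i, μ t i * z t i) ^ 2 ≤ (∑ i, μ t i ^ 2) * B2 :=
          le_trans hcs (mul_le_mul_of_nonneg_left (hB2 t ht0) hP0)
        have h3 : (c * (∑ i, μ t i ^ 2)) ^ 2 ≤ (∑ i, μ t i * z t i) ^ 2 :=
          pow_le_pow_left₀ (by positivity) key 2
        rw [le_div_iff₀ (by positivity : (0:ℝ) < c ^ 2)]
        nlinarith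
    have h4 : μ t j ^ 2 ≤ B2 / c ^ 2 :=
      le_trans (Finset.single_le_sum (fun i _ => sq_nonneg (μ t i)) (Finset.mem_univ j)) hPB
    have h5 : B2 / c ^ 2 < ε ^ 2 := by
      have hce : c * ε = Real.sqrt B2 + 1 := by
        rw [hcdef]
        field_simp
      have hsq : Real.sqrt B2 ^ 2 = B2 := Real.sq_sqrt hB20
      rw [div_lt_iff₀ (by positivity : (0:ℝ) < c ^ 2)]
      nlinarith [Real.sqrt_nonneg B2]
    have h6 : μ t j ^ 2 < ε ^ 2 := lt_of_le_of_lt h4 h5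
    rw [Real.dist_eq, sub_zero]
    nlinarith [abs_nonneg (μ t j), sq_abs (μ t j)]
  -- η tends to 0
  have hbnd0 : Tendsto (fun t => C * Real.exp (-(lam * t))) atTop (nhds 0) := by
    have h1 : Tendsto (fun t : ℝ => lam * t) atTop atTop :=
      Tendsto.const_mul_atTop hlam tendsto_id
    have h2 : Tendsto (fun t : ℝ => -(lam * t)) atTop atBot :=
      tendsto_neg_atTop_atBot.comp h1
    have h3 : Tendsto (fun t : ℝ => Real.exp (-(lam * t))) atTop (nhds 0) :=
      Real.tendsto_exp_atBot.comp h2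
    simpa using h3.const_mul C
  have hη0 : ∀ i, Tendsto (fun t => η t i) atTop (nhds 0) := by
    intro i
    refine squeeze_zero_norm' ?_ hbnd0
    filter_upwards [eventually_ge_atTop (0:ℝ)] with t ht
    simpa [Real.norm_eq_abs] using hηb t ht i
  -- conclude
  obtain ⟨CE, hCE⟩ := hLeBdd
  have hCE0 : 0 ≤ CE := le_trans (abs_nonneg _) (hCE 0 le_rfl ⟨0, hne⟩ ⟨0, hne⟩)
  have hterm : ∀ {k : ℕ} (M : ℝ → Matrix (Fin k) (Fin ne) ℝ) (CM : ℝ),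
      (∀ t, 0 ≤ t → ∀ i j, |M t i j| ≤ CM) → ∀ (i : Fin k),
      Tendsto (fun t => (M t).mulVec (μ t) i) atTop (nhds 0) := by
    intro k M CM hM i
    have hsum : Tendsto (fun t => ∑ j, M t i j * μ t j) atTop (nhds 0) := by
      have h0 : Tendsto (fun t => ∑ j : Fin ne, (fun t j => M t i j * μ t j) t j) atTop
          (nhds (∑ _j : Fin ne, (0:ℝ))) := by
        refine tendsto_finset_sum _ fun j _ => ?_
        refine squeeze_zero_norm' (a := fun t => CM * |μ t j|) ?_ ?_
        · filter_upwards [eventually_ge_atTop (0:ℝ)] with t ht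
          show ‖M t i j * μ t j‖ ≤ CM * |μ t j|
          rw [Real.norm_eq_abs, abs_mul]
          exact mul_le_mul_of_nonneg_right (hM t ht i j) (abs_nonneg _)
        · have := ((hμ0 j).abs).const_mul CM
          simpa using this
      simpa using h0
    refine hsum.congr ?_
    intro t
    simp [Matrix.mulVec, dotProduct]
  constructor
  · rw [tendsto_pi_nhds]
    intro i
    have h1 : Tendsto (fun t => (Le t).mulVec (μ t) i) atTop (nhds 0) := hterm Le CE hCE i
    refine h1.congr' ?_
    filter_upwards [eventually_ge_atTop (0:ℝ)] with t ht
    rw [← hxeμ t ht]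
  · rw [tendsto_pi_nhds]
    intro i
    have h1 : Tendsto (fun t => η t i + (Lm t).mulVec (μ t) i) atTop (nhds 0) := by
      have := (hη0 i).add (hterm Lm CL (fun t ht a b => hCL t ht a b) i)
      simpa using this
    refine h1.congr' ?_
    filter_upwards [eventually_ge_atTop (0:ℝ)] with t _
    conv_rhs => rw [hxmη t]
    simp
end
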